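/- arXiv:0710.1844 — 2 statements merged into one kernel-verified Lean document; each statement's English description precedes it below -/
import Mathlib

section
/- Let n ≥ 2 and R > 0, and let Ω be the open ball of radius R centered at the origin in EuclideanSpace ℝ (Fin n). There exists a constant C > 0, depending only on n and R, such that for every continuous H : closure(Ω) → ℝ with sup_{closure(Ω)} |H| ≤ (n−1)/(nR) and every u continuous on closure(Ω) and twice continuously differentiable on Ω satisfying Σᵢ ∂ᵢ(∂ᵢu/√(1 + ‖∇u‖²)) = n·H(x) on Ω, one has sup_{closure(Ω)} |u| ≤ C + sup_{∂Ω} |u|. -/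
/-- The quasilinear mean curvature operator for Euclidean graphs:
`Q[u](x) = Σᵢ ∂ᵢ(∂ᵢu / √(1 + ‖∇u‖²))(x)`. -/
noncomputable def meanCurvOp (n : ℕ) (u : EuclideanSpace ℝ (Fin n) → ℝ)
    (x : EuclideanSpace ℝ (Fin n)) : ℝ :=
  ∑ i : Fin n,
    fderiv ℝ
      (fun y => fderiv ℝ u y (EuclideanSpace.single i (1 : ℝ)) /
        Real.sqrt (1 + ‖gradient u y‖ ^ 2))
      x (EuclideanSpace.single i (1 : ℝ))

open Metric Set Filter Real
open scoped RealInnerProductSpace Topology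

section Aux
variable {n : ℕ}
local notation "E" => EuclideanSpace ℝ (Fin n)

lemma inner_gradient_eq (u : E → ℝ) (y : E) (v : E) :
    ⟪gradient u y, v⟫ = fderiv ℝ u y v := by
  simp [gradient, InnerProductSpace.toDual_symm_apply]

noncomputable def quotD (w p : E) : E →L[ℝ] ℝ :=
  (Real.sqrt (1 + ‖p‖ ^ 2))⁻¹ • innerSL ℝ w -
    ((⟪w, p⟫) / (Real.sqrt (1 + ‖p‖ ^ 2)) ^ 3) • innerSL ℝ p


lemma quotD_apply (w p v : E) :
    quotD w p v = ⟪w, v⟫ / Real.sqrt (1 + ‖p‖ ^ 2) -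
      ⟪w, p⟫ * ⟪p, v⟫ / (Real.sqrt (1 + ‖p‖ ^ 2)) ^ 3 := by
  simp [quotD, div_eq_mul_inv]; ring

lemma hasFDerivAt_quot (w p : E) :
    HasFDerivAt (fun q : E => ⟪w, q⟫ / Real.sqrt (1 + ‖q‖ ^ 2)) (quotD w p) p := by
  have hz : (0:ℝ) < 1 + ‖p‖ ^ 2 := by positivity
  set W := Real.sqrt (1 + ‖p‖ ^ 2) with hW
  have hWpos : 0 < W := Real.sqrt_pos.mpr hz
  have hW2 : W ^ 2 = 1 + ‖p‖ ^ 2 := Real.sq_sqrt hz.le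
  have h1 : HasFDerivAt (fun q : E => ⟪w, q⟫) (innerSL ℝ w) p := by
    exact (innerSL ℝ w).hasFDerivAt
  have h2 : HasFDerivAt (fun q : E => 1 + ‖q‖ ^ 2) (2 • innerSL ℝ p) p := by
    have := (hasFDerivAt_id p).norm_sq
    simpa using this.const_add 1
  have h4 : HasDerivAt (fun t : ℝ => (Real.sqrt t)⁻¹)
      (-(1 / (2 * W)) / W ^ 2) (1 + ‖p‖ ^ 2) := by
    have h3 : HasDerivAt Real.sqrt (1 / (2 * W)) (1 + ‖p‖ ^ 2) :=
      Real.hasDerivAt_sqrt hz.ne'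
    exact h3.inv hWpos.ne'
  have h5 : HasFDerivAt (fun q : E => (Real.sqrt (1 + ‖q‖ ^ 2))⁻¹)
      ((-(1 / (2 * W)) / W ^ 2) • (2 • innerSL ℝ p)) p :=
    h4.comp_hasFDerivAt (f := fun q : E => 1 + ‖q‖ ^ 2) p h2
  have h6 := h1.mul h5
  have : HasFDerivAt (fun q : E => ⟪w, q⟫ * (Real.sqrt (1 + ‖q‖ ^ 2))⁻¹)
      ((⟪w, p⟫) • ((-(1 / (2 * W)) / W ^ 2) • (2 • innerSL ℝ p)) +
        (Real.sqrt (1 + ‖p‖ ^ 2))⁻¹ • innerSL ℝ w) p := h6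
  simp only [div_eq_mul_inv]
  refine this.congr_fderiv ?_
  ext v
  simp only [quotD, ContinuousLinearMap.coe_sub', Pi.sub_apply, ContinuousLinearMap.coe_smul',
    Pi.smul_apply, smul_eq_mul, ContinuousLinearMap.add_apply, ContinuousLinearMap.coe_smul,
    innerSL_apply_apply]
  rw [← hW]
  have h7 : W ^ 3 = W * W ^ 2 := by ring
  field_simp [hW2]
  simp only [smul_eq_mul, nsmul_eq_mul]
  ring

lemma differentiableAt_gradient_of_contDiffAt (u : E → ℝ) (x : E)
    (hu : ContDiffAt ℝ 2 u x) : DifferentiableAt ℝ (gradient u) x := by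
  have hd : DifferentiableAt ℝ (fderiv ℝ u) x := by
    have h1 : ContDiffAt ℝ 1 (fderiv ℝ u) x := hu.fderiv_right (by norm_num)
    exact h1.differentiableAt (by norm_num)
  have : DifferentiableAt ℝ
      (fun y => (InnerProductSpace.toDual ℝ (EuclideanSpace ℝ (Fin n))).symm (fderiv ℝ u y)) x :=
    ((InnerProductSpace.toDual ℝ (EuclideanSpace ℝ (Fin n))).symm.toContinuousLinearEquiv.differentiableAt).comp x hd
  exact this

lemma meanCurvOp_eq (u : E → ℝ) (x : E) (hu : ContDiffAt ℝ 2 u x) :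
    meanCurvOp n u x =
      ∑ i : Fin n,
        quotD (EuclideanSpace.single i (1 : ℝ)) (gradient u x)
          (fderiv ℝ (gradient u) x (EuclideanSpace.single i (1 : ℝ))) := by
  have hG : HasFDerivAt (gradient u) (fderiv ℝ (gradient u) x) x :=
    (differentiableAt_gradient_of_contDiffAt u x hu).hasFDerivAt
  unfold meanCurvOp
  refine Finset.sum_congr rfl fun i _ => ?_
  have hfun : (fun y => fderiv ℝ u y (EuclideanSpace.single i (1 : ℝ)) /
        Real.sqrt (1 + ‖gradient u y‖ ^ 2)) =
      (fun q : E => ⟪EuclideanSpace.single i (1 : ℝ), q⟫ / Real.sqrt (1 + ‖q‖ ^ 2)) ∘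
        (gradient u) := by
    funext y
    simp only [Function.comp_apply]
    rw [real_inner_comm, inner_gradient_eq]
  rw [hfun]
  have hcomp := (hasFDerivAt_quot (EuclideanSpace.single i (1 : ℝ)) (gradient u x)).comp x hG
  rw [hcomp.fderiv]
  rfl

lemma localmax_snd_nonpos (g : E → ℝ) (x : E) (hg : ContDiffAt ℝ 2 g x)
    (hmax : IsLocalMax g x) (v : E) :
    ⟪v, fderiv ℝ (gradient g) x v⟫ ≤ 0 := by
  by_contra hκ
  push_neg at hκ
  set κ := ⟪v, fderiv ℝ (gradient g) x v⟫ with hκdef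
  -- a good neighborhood
  obtain ⟨s, hs_nhds, hgs⟩ : ∃ s ∈ 𝓝 x, ContDiffOn ℝ 2 g s := hg.contDiffOn le_rfl (by norm_num)
  have hmax' : {y | g y ≤ g x} ∈ 𝓝 x := hmax
  obtain ⟨ε, hε, hball⟩ := Metric.mem_nhds_iff.mp (inter_mem hs_nhds hmax')
  have hgball : ContDiffOn ℝ 2 g (ball x ε) :=
    hgs.mono fun y hy => ((hball hy).1)
  set ℓ : ℝ → E := fun t => x + t • v with hℓdef
  have hℓ0 : ℓ 0 = x := by simp [hℓdef]
  set δ := ε / (‖v‖ + 1) with hδdef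
  have hδ : 0 < δ := by positivity
  have hmem : ∀ t : ℝ, |t| < δ → ℓ t ∈ ball x ε := by
    intro t ht
    have : ‖ℓ t - x‖ = |t| * ‖v‖ := by
      simp [hℓdef, norm_smul, add_sub_cancel_left]
    rw [mem_ball, dist_eq_norm, this]
    calc |t| * ‖v‖ ≤ |t| * (‖v‖ + 1) := by
          have := abs_nonneg t; nlinarith [norm_nonneg v]
      _ < δ * (‖v‖ + 1) := by
          have h1 : (0:ℝ) < ‖v‖ + 1 := by positivity
          exact (mul_lt_mul_iff_left₀ h1).mpr ht
      _ = ε := by rw [hδdef]; field_simp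
  set ψ : ℝ → ℝ := fun t => fderiv ℝ g (ℓ t) v with hψdef
  have hℓd : ∀ t : ℝ, HasDerivAt ℓ v t := by
    intro t
    simpa [hℓdef] using (((hasDerivAt_id t).smul_const v).const_add x)
  have h1 : ∀ t : ℝ, |t| < δ → HasDerivAt (fun s => g (ℓ s)) (ψ t) t := by
    intro t ht
    have hd : DifferentiableAt ℝ g (ℓ t) :=
      ((hgball.contDiffAt ((isOpen_ball).mem_nhds (hmem t ht))).differentiableAt (by norm_num))
    exact (hd.hasFDerivAt.comp_hasDerivAt t (hℓd t))
  -- ψ has derivative κ at 0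
  have hψfun : ψ = fun t => (innerSL ℝ v) (gradient g (ℓ t)) := by
    funext t
    simp only [hψdef, innerSL_apply_apply]
    rw [real_inner_comm, inner_gradient_eq]
  have h2 : HasDerivAt ψ κ 0 := by
    rw [hψfun]
    have hGd : HasFDerivAt (gradient g) (fderiv ℝ (gradient g) x) x :=
      (differentiableAt_gradient_of_contDiffAt g x hg).hasFDerivAt
    have hc : HasFDerivAt (fun y => (innerSL ℝ v) (gradient g y))
        ((innerSL ℝ v).comp (fderiv ℝ (gradient g) x)) x :=
      ((innerSL ℝ v).hasFDerivAt).comp x hGd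
    have hc' : HasFDerivAt (fun y => (innerSL ℝ v) (gradient g y))
        ((innerSL ℝ v).comp (fderiv ℝ (gradient g) x)) (ℓ 0) := by rw [hℓ0]; exact hc
    have := hc'.comp_hasDerivAt 0 (hℓd 0)
    exact this
  have hψ0 : ψ 0 = 0 := by
    simp only [hψdef, hℓ0]
    rw [hmax.fderiv_eq_zero]
    rfl
  -- ψ is positive slightly to the right of 0
  have hslope : ∀ᶠ t in 𝓝[>] (0:ℝ), 0 < ψ t / t := by
    have ht := hasDerivAt_iff_tendsto_slope.mp h2
    have := ht.eventually (lt_mem_nhds hκ)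
    have h3 : ∀ᶠ t in 𝓝[≠] (0:ℝ), 0 < ψ t / t := by
      filter_upwards [this] with t ht'
      simpa [slope_def_field, hψ0] using ht'
    exact h3.filter_mono (nhdsWithin_mono 0 (fun t ht => ne_of_gt ht))
  have hδmem : ∀ᶠ t in 𝓝[>] (0:ℝ), t < δ := by
    exact eventually_nhdsWithin_of_eventually_nhds (gt_mem_nhds hδ)
  obtain ⟨c, hc0, hcsub⟩ := mem_nhdsGT_iff_exists_Ioc_subset.mp
    ((hslope.and hδmem) : {t | 0 < ψ t / t ∧ t < δ} ∈ 𝓝[>] (0:ℝ))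
  have hc0' : (0:ℝ) < c := hc0
  have hcprop : ∀ t ∈ Ioc (0:ℝ) c, 0 < ψ t ∧ t < δ := by
    intro t ht
    obtain ⟨h4, h5⟩ := hcsub ht
    refine ⟨?_, h5⟩
    by_contra hneg
    push_neg at hneg
    have : ψ t / t ≤ 0 := div_nonpos_iff.mpr (Or.inr ⟨hneg, ht.1.le⟩)
    linarith
  have hcδ : c ≤ δ ∨ c > δ := le_or_gt c δ
  -- pick c' := min c (δ/2)
  set c' := min c (δ/2) with hc'def
  have hc'0 : 0 < c' := lt_min hc0' (by linarith)
  have hc'δ : c' < δ := lt_of_le_of_lt (min_le_right _ _) (by linarith)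
  have hIccδ : ∀ t ∈ Icc (0:ℝ) c', |t| < δ := by
    intro t ht
    rw [abs_of_nonneg ht.1]
    exact lt_of_le_of_lt ht.2 hc'δ
  -- strict mono on [0, c']
  have hmono : StrictMonoOn (fun s => g (ℓ s)) (Icc 0 c') := by
    apply strictMonoOn_of_deriv_pos (convex_Icc 0 c')
    · intro t ht
      exact ((h1 t (hIccδ t ht)).differentiableAt.continuousAt).continuousWithinAt
    · intro t ht
      rw [interior_Icc] at ht
      rw [(h1 t (hIccδ t ⟨ht.1.le, ht.2.le⟩)).deriv]
      exact (hcprop t ⟨ht.1, le_trans ht.2.le (min_le_left _ _)⟩).1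
  have hgt : g (ℓ c') > g (ℓ 0) :=
    hmono (left_mem_Icc.mpr hc'0.le) (right_mem_Icc.mpr hc'0.le) hc'0
  have hle : g (ℓ c') ≤ g x := by
    have : ℓ c' ∈ ball x ε := hmem c' (by rw [abs_of_pos hc'0]; exact hc'δ)
    exact (hball this).2
  rw [hℓ0] at hgt
  linarith

lemma euclid_sum_single (p : E) :
    ∑ i : Fin n, p i • EuclideanSpace.single i (1 : ℝ) = p := by
  have := (EuclideanSpace.basisFun (Fin n) ℝ).sum_repr p
  simpa [EuclideanSpace.basisFun_apply, EuclideanSpace.basisFun_repr] using this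

lemma inner_single_left' (i : Fin n) (v : E) :
    ⟪EuclideanSpace.single i (1 : ℝ), v⟫ = v i := by
  simp [EuclideanSpace.inner_single_left]

lemma trace_ineq (S : E →L[ℝ] E) (p : E) (hS : ∀ v, ⟪v, S v⟫ ≤ 0) :
    (∑ i : Fin n, ⟪EuclideanSpace.single i (1 : ℝ), S (EuclideanSpace.single i (1 : ℝ))⟫)
      - ⟪p, S p⟫ / (Real.sqrt (1 + ‖p‖ ^ 2)) ^ 2 ≤ 0 := by
  by_cases hp : p = 0
  · simp only [hp, inner_zero_left, map_zero, inner_zero_right, zero_div, sub_zero]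
    exact Finset.sum_nonpos fun i _ => hS _
  have hpn : ‖p‖ ≠ 0 := norm_ne_zero_iff.mpr hp
  have hz : (0:ℝ) < 1 + ‖p‖ ^ 2 := by positivity
  set W := Real.sqrt (1 + ‖p‖ ^ 2) with hWdef
  have hW2 : W ^ 2 = 1 + ‖p‖ ^ 2 := Real.sq_sqrt hz.le
  have hWpos : 0 < W := Real.sqrt_pos.mpr hz
  set c := (1 - W⁻¹) / ‖p‖ ^ 2 with hcdef
  have hppos : 0 < ‖p‖ ^ 2 := by positivity
  have hW1 : 1 < W := by nlinarith [hWpos, hW2]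
  have hcid : 2 * c - c ^ 2 * ‖p‖ ^ 2 = 1 / W ^ 2 := by
    rw [hcdef, show ‖p‖ ^ 2 = W ^ 2 - 1 by linarith]
    have h2 : W ^ 2 - 1 ≠ 0 := by nlinarith
    have h3 : W ≠ 0 := hWpos.ne'
    field_simp
    ring
  set e : Fin n → E := fun i => EuclideanSpace.single i (1 : ℝ) with hedef
  set w : Fin n → E := fun k => e k - (c * p k) • p with hwdef
  have hA : ∑ k : Fin n, p k * ⟪e k, S p⟫ = ⟪p, S p⟫ := by
    simp only [hedef, inner_single_left']
    rw [PiLp.inner_apply]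
    simp [RCLike.inner_apply, conj_trivial, mul_comm]
  have h0 : S p = ∑ k : Fin n, p k • S (e k) := by
    conv_lhs => rw [← euclid_sum_single p]
    rw [map_sum]
    exact Finset.sum_congr rfl fun k _ => by rw [map_smul, hedef]
  have hB : ∑ k : Fin n, p k * ⟪p, S (e k)⟫ = ⟪p, S p⟫ := by
    rw [h0, inner_sum]
    exact Finset.sum_congr rfl fun k _ => (real_inner_smul_right _ _ _).symm
  have hC : ∑ k : Fin n, p k * p k = ‖p‖ ^ 2 := by
    rw [← real_inner_self_eq_norm_sq, PiLp.inner_apply]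
    simp [RCLike.inner_apply, conj_trivial, sq]
  have hexp : ∀ k : Fin n, ⟪w k, S (w k)⟫ =
      ⟪e k, S (e k)⟫ - c * (p k * ⟪e k, S p⟫) - c * (p k * ⟪p, S (e k)⟫)
        + c ^ 2 * (p k * p k) * ⟪p, S p⟫ := by
    intro k
    rw [hwdef]
    simp only [map_sub, map_smul, inner_sub_left, inner_sub_right,
      real_inner_smul_left, real_inner_smul_right]
    ring
  have hsum : ∑ k : Fin n, ⟪w k, S (w k)⟫ =
      (∑ i : Fin n, ⟪e i, S (e i)⟫) - (2 * c - c ^ 2 * ‖p‖ ^ 2) * ⟪p, S p⟫ := by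
    rw [Finset.sum_congr rfl fun k _ => hexp k]
    simp only [Finset.sum_add_distrib, Finset.sum_sub_distrib, ← Finset.mul_sum]
    rw [hA, hB, ← Finset.sum_mul, ← Finset.mul_sum, hC]
    ring
  have hnonpos : ∑ k : Fin n, ⟪w k, S (w k)⟫ ≤ 0 := Finset.sum_nonpos fun k _ => hS _
  rw [hsum, hcid] at hnonpos
  calc (∑ i : Fin n, ⟪EuclideanSpace.single i (1 : ℝ), S (EuclideanSpace.single i (1 : ℝ))⟫)
      - ⟪p, S p⟫ / W ^ 2
      = (∑ i : Fin n, ⟪e i, S (e i)⟫) - 1 / W ^ 2 * ⟪p, S p⟫ := by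
        rw [hedef]; ring
    _ ≤ 0 := hnonpos

lemma sum_pk_inner (S : E →L[ℝ] E) (p : E) :
    ∑ k : Fin n, p k * ⟪p, S (EuclideanSpace.single k (1 : ℝ))⟫ = ⟪p, S p⟫ := by
  have h0 : S p = ∑ k : Fin n, p k • S (EuclideanSpace.single k (1 : ℝ)) := by
    conv_lhs => rw [← euclid_sum_single p]
    rw [map_sum]
    exact Finset.sum_congr rfl fun k _ => by rw [map_smul]
  rw [h0, inner_sum]
  exact Finset.sum_congr rfl fun k _ => (real_inner_smul_right _ _ _).symm

lemma barrier_contDiffAt (R M : ℝ) (hR : 0 < R) (x : E) (hx : x ∈ ball (0 : E) R) :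
    ContDiffAt ℝ 2 (fun y : E => M + Real.sqrt (R ^ 2 - ‖y‖ ^ 2)) x := by
  have hr2 : 0 < R ^ 2 - ‖x‖ ^ 2 := by
    have := mem_ball_zero_iff.mp hx
    nlinarith [norm_nonneg x]
  exact contDiffAt_const.add
    (((contDiffAt_const.sub (contDiffAt_id.norm_sq (𝕜 := ℝ))).sqrt hr2.ne'))

lemma barrier_hasFDerivAt (R M : ℝ) (hR : 0 < R) (x : E) (hx : x ∈ ball (0 : E) R) :
    HasFDerivAt (fun y : E => M + Real.sqrt (R ^ 2 - ‖y‖ ^ 2))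
      ((-(Real.sqrt (R ^ 2 - ‖x‖ ^ 2))⁻¹) • innerSL ℝ x) x := by
  have hr2 : 0 < R ^ 2 - ‖x‖ ^ 2 := by
    have := mem_ball_zero_iff.mp hx
    nlinarith [norm_nonneg x]
  have hs : 0 < Real.sqrt (R ^ 2 - ‖x‖ ^ 2) := Real.sqrt_pos.mpr hr2
  have h1 : HasFDerivAt (fun y : E => R ^ 2 - ‖y‖ ^ 2)
      (-(2 • innerSL ℝ x)) x := by
    simpa using ((hasFDerivAt_id x).norm_sq.const_sub (R ^ 2))
  have h2 : HasDerivAt Real.sqrt (1 / (2 * Real.sqrt (R ^ 2 - ‖x‖ ^ 2)))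
      (R ^ 2 - ‖x‖ ^ 2) := Real.hasDerivAt_sqrt hr2.ne'
  have h3 := (h2.comp_hasFDerivAt x h1).const_add M
  refine h3.congr_fderiv ?_
  ext v
  simp only [ContinuousLinearMap.coe_smul', Pi.smul_apply, innerSL_apply_apply, smul_eq_mul,
    ContinuousLinearMap.neg_apply, ContinuousLinearMap.coe_smul]
  field_simp
  ring

lemma barrier_gradient (R M : ℝ) (hR : 0 < R) (x : E) (hx : x ∈ ball (0 : E) R) :
    gradient (fun y : E => M + Real.sqrt (R ^ 2 - ‖y‖ ^ 2)) x =
      (-(Real.sqrt (R ^ 2 - ‖x‖ ^ 2))⁻¹) • x := by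
  have hfd := (barrier_hasFDerivAt R M hR x hx).fderiv
  refine ext_inner_right (𝕜 := ℝ) fun v => ?_
  rw [inner_gradient_eq, hfd]
  simp [real_inner_smul_left]

lemma barrier_quot (R M : ℝ) (hR : 0 < R) (i : Fin n) (x : E) (hx : x ∈ ball (0 : E) R) :
    fderiv ℝ (fun y : E => M + Real.sqrt (R ^ 2 - ‖y‖ ^ 2)) x (EuclideanSpace.single i (1 : ℝ)) /
      Real.sqrt (1 + ‖gradient (fun y : E => M + Real.sqrt (R ^ 2 - ‖y‖ ^ 2)) x‖ ^ 2) =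
    -(x i / R) := by
  have hr2 : 0 < R ^ 2 - ‖x‖ ^ 2 := by
    have := mem_ball_zero_iff.mp hx
    nlinarith [norm_nonneg x]
  have hs : 0 < Real.sqrt (R ^ 2 - ‖x‖ ^ 2) := Real.sqrt_pos.mpr hr2
  have hs2 : (Real.sqrt (R ^ 2 - ‖x‖ ^ 2)) ^ 2 = R ^ 2 - ‖x‖ ^ 2 := Real.sq_sqrt hr2.le
  rw [(barrier_hasFDerivAt R M hR x hx).fderiv, barrier_gradient R M hR x hx]
  have hnorm : ‖(-(Real.sqrt (R ^ 2 - ‖x‖ ^ 2))⁻¹) • x‖ ^ 2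
      = ‖x‖ ^ 2 / (R ^ 2 - ‖x‖ ^ 2) := by
    rw [norm_smul]
    rw [mul_pow]
    rw [← hs2]
    simp [abs_of_pos hs, div_eq_mul_inv, inv_pow]
    ring
  rw [hnorm]
  have hW : Real.sqrt (1 + ‖x‖ ^ 2 / (R ^ 2 - ‖x‖ ^ 2))
      = R / Real.sqrt (R ^ 2 - ‖x‖ ^ 2) := by
    have h4 : 1 + ‖x‖ ^ 2 / (R ^ 2 - ‖x‖ ^ 2) = R ^ 2 / (R ^ 2 - ‖x‖ ^ 2) := by
      field_simp
      ring
    rw [h4, div_eq_mul_inv, Real.sqrt_mul (by positivity), Real.sqrt_inv,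
      Real.sqrt_sq hR.le, ← div_eq_mul_inv]
  rw [hW]
  have hinner : (((-(Real.sqrt (R ^ 2 - ‖x‖ ^ 2))⁻¹) • innerSL ℝ x)
      (EuclideanSpace.single i (1 : ℝ))) = -(Real.sqrt (R ^ 2 - ‖x‖ ^ 2))⁻¹ * x i := by
    simp [EuclideanSpace.inner_single_right]
  rw [hinner, div_div_eq_mul_div,
    show -(Real.sqrt (R ^ 2 - ‖x‖ ^ 2))⁻¹ * x i * Real.sqrt (R ^ 2 - ‖x‖ ^ 2) = -(x i) by
      field_simp, neg_div]

lemma meanCurvOp_barrier (R M : ℝ) (hR : 0 < R) (x : E) (hx : x ∈ ball (0 : E) R) :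
    meanCurvOp n (fun y : E => M + Real.sqrt (R ^ 2 - ‖y‖ ^ 2)) x = -(n / R) := by
  unfold meanCurvOp
  have : ∀ i : Fin n,
      fderiv ℝ (fun y => fderiv ℝ (fun y : E => M + Real.sqrt (R ^ 2 - ‖y‖ ^ 2)) y
          (EuclideanSpace.single i (1 : ℝ)) /
        Real.sqrt (1 + ‖gradient (fun y : E => M + Real.sqrt (R ^ 2 - ‖y‖ ^ 2)) y‖ ^ 2))
        x (EuclideanSpace.single i (1 : ℝ)) = -(1 / R) := by
    intro i
    have hev : (fun y => fderiv ℝ (fun y : E => M + Real.sqrt (R ^ 2 - ‖y‖ ^ 2)) y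
          (EuclideanSpace.single i (1 : ℝ)) /
        Real.sqrt (1 + ‖gradient (fun y : E => M + Real.sqrt (R ^ 2 - ‖y‖ ^ 2)) y‖ ^ 2))
        =ᶠ[𝓝 x] (fun y : E => -(1 / R) * ⟪EuclideanSpace.single i (1 : ℝ), y⟫) := by
      filter_upwards [isOpen_ball.mem_nhds hx] with y hy
      rw [barrier_quot R M hR i y hy]
      have : ⟪EuclideanSpace.single i (1 : ℝ), y⟫ = y i := by
        simp [EuclideanSpace.inner_single_left]
      rw [this]
      ring
    rw [hev.fderiv_eq]
    have hlin : HasFDerivAt (fun y : E => -(1 / R) * ⟪EuclideanSpace.single i (1 : ℝ), y⟫)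
        ((-(1 / R)) • innerSL ℝ (EuclideanSpace.single i (1 : ℝ))) x := by
      exact (innerSL ℝ (EuclideanSpace.single i (1 : ℝ))).hasFDerivAt.const_mul (-(1 / R))
    rw [hlin.fderiv]
    simp [EuclideanSpace.inner_single_left, EuclideanSpace.single_apply]
  rw [Finset.sum_congr rfl fun i _ => this i]
  simp [Finset.card_univ]
  ring

lemma upper_bound (hn : 2 ≤ n) (R : ℝ) (hR : 0 < R) (H u : E → ℝ)
    (hH : ∀ x ∈ closedBall (0 : E) R, |H x| ≤ ((n : ℝ) - 1) / (n * R))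
    (hu : ContinuousOn u (closedBall (0 : E) R))
    (hu2 : ContDiffOn ℝ 2 u (ball (0 : E) R))
    (heq : ∀ x ∈ ball (0 : E) R, meanCurvOp n u x = n * H x)
    (M : ℝ) (hM : ∀ y : E, ‖y‖ = R → u y ≤ M) :
    ∀ x ∈ closedBall (0 : E) R, u x ≤ M + R := by
  set φ : E → ℝ := fun y => M + Real.sqrt (R ^ 2 - ‖y‖ ^ 2) with hφdef
  set g : E → ℝ := fun y => u y - φ y with hgdef
  have hφcont : Continuous φ := by
    exact continuous_const.add ((continuous_const.sub ((continuous_norm).pow 2)).sqrt)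
  have hgcont : ContinuousOn g (closedBall (0 : E) R) := hu.sub hφcont.continuousOn
  obtain ⟨x₀, hx₀K, hx₀max⟩ := (isCompact_closedBall (0 : E) R).exists_isMaxOn
    ⟨0, mem_closedBall_self hR.le⟩ hgcont
  suffices hg0 : g x₀ ≤ 0 by
    intro x hx
    have h1 : g x ≤ g x₀ := hx₀max hx
    have hφle : φ x ≤ M + R := by
      have h2 : Real.sqrt (R ^ 2 - ‖x‖ ^ 2) ≤ R := by
        calc Real.sqrt (R ^ 2 - ‖x‖ ^ 2) ≤ Real.sqrt (R ^ 2) :=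
              Real.sqrt_le_sqrt (by nlinarith [norm_nonneg x])
          _ = R := Real.sqrt_sq hR.le
      simpa [hφdef] using h2
    have : u x = g x + φ x := by simp [hgdef]
    linarith
  by_contra hpos
  push_neg at hpos
  have hx₀R : ‖x₀‖ ≤ R := mem_closedBall_zero_iff.mp hx₀K
  rcases eq_or_lt_of_le hx₀R with heqR | hlt
  · have hφx₀ : φ x₀ = M := by
      simp [hφdef, heqR]
    have : g x₀ = u x₀ - M := by rw [hgdef]; simp [hφx₀]
    have := hM x₀ heqR
    simp only [hgdef] at hpos
    rw [hφx₀] at hpos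
    linarith
  · have hx₀ball : x₀ ∈ ball (0 : E) R := mem_ball_zero_iff.mpr hlt
    have hnhds : closedBall (0 : E) R ∈ 𝓝 x₀ :=
      mem_of_superset (isOpen_ball.mem_nhds hx₀ball) ball_subset_closedBall
    have hloc : IsLocalMax g x₀ := hx₀max.isLocalMax hnhds
    have hu2x : ContDiffAt ℝ 2 u x₀ := hu2.contDiffAt (isOpen_ball.mem_nhds hx₀ball)
    have hφ2x : ContDiffAt ℝ 2 φ x₀ := barrier_contDiffAt R M hR x₀ hx₀ball
    have hg2x : ContDiffAt ℝ 2 g x₀ := hu2x.sub hφ2x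
    have hdu : DifferentiableAt ℝ u x₀ := hu2x.differentiableAt (by norm_num)
    have hdφ : DifferentiableAt ℝ φ x₀ := hφ2x.differentiableAt (by norm_num)
    have hfd0 : fderiv ℝ g x₀ = 0 := hloc.fderiv_eq_zero
    have hfdeq : fderiv ℝ u x₀ = fderiv ℝ φ x₀ := by
      have hsub : fderiv ℝ g x₀ = fderiv ℝ u x₀ - fderiv ℝ φ x₀ := fderiv_sub hdu hdφ
      rw [hfd0] at hsub
      exact (sub_eq_zero.mp hsub.symm)
    set p := gradient u x₀ with hpdef
    have hpφ : gradient φ x₀ = p := by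
      rw [hpdef]
      unfold gradient
      rw [hfdeq]
    -- second derivative operators
    set Hu := fderiv ℝ (gradient u) x₀ with hHudef
    set Hφ := fderiv ℝ (gradient φ) x₀ with hHφdef
    have hdgu : DifferentiableAt ℝ (gradient u) x₀ :=
      differentiableAt_gradient_of_contDiffAt u x₀ hu2x
    have hdgφ : DifferentiableAt ℝ (gradient φ) x₀ :=
      differentiableAt_gradient_of_contDiffAt φ x₀ hφ2x
    have hgradg : (gradient g) =ᶠ[𝓝 x₀] fun y => gradient u y - gradient φ y := by
      filter_upwards [isOpen_ball.mem_nhds hx₀ball] with y hy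
      have hdu' : DifferentiableAt ℝ u y :=
        (hu2.contDiffAt (isOpen_ball.mem_nhds hy)).differentiableAt (by norm_num)
      have hdφ' : DifferentiableAt ℝ φ y :=
        (barrier_contDiffAt R M hR y hy).differentiableAt (by norm_num)
      unfold gradient
      rw [hgdef]
      rw [fderiv_fun_sub hdu' hdφ', map_sub]
    have hSg : fderiv ℝ (gradient g) x₀ = Hu - Hφ := by
      rw [hgradg.fderiv_eq, fderiv_fun_sub hdgu hdgφ]
    have hSneg : ∀ v : E, ⟪v, (Hu - Hφ) v⟫ ≤ 0 := by
      intro v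
      have := localmax_snd_nonpos g x₀ hg2x hloc v
      rwa [hSg] at this
    -- expansions
    have hexp_u : meanCurvOp n u x₀ =
        ∑ i : Fin n, quotD (EuclideanSpace.single i (1 : ℝ)) p
          (Hu (EuclideanSpace.single i (1 : ℝ))) := meanCurvOp_eq u x₀ hu2x
    have hexp_φ : meanCurvOp n φ x₀ =
        ∑ i : Fin n, quotD (EuclideanSpace.single i (1 : ℝ)) p
          (Hφ (EuclideanSpace.single i (1 : ℝ))) := by
      have := meanCurvOp_eq φ x₀ hφ2x
      rwa [hpφ] at this
    have hbar : meanCurvOp n φ x₀ = -((n : ℝ) / R) := meanCurvOp_barrier R M hR x₀ hx₀ball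
    set W := Real.sqrt (1 + ‖p‖ ^ 2) with hWdef
    have hWpos : 0 < W := Real.sqrt_pos.mpr (by positivity)
    have hdiff : meanCurvOp n u x₀ - meanCurvOp n φ x₀ =
        (1 / W) * ((∑ i : Fin n, ⟪EuclideanSpace.single i (1 : ℝ),
            (Hu - Hφ) (EuclideanSpace.single i (1 : ℝ))⟫)
          - ⟪p, (Hu - Hφ) p⟫ / W ^ 2) := by
      rw [hexp_u, hexp_φ, ← Finset.sum_sub_distrib]
      have hterm : ∀ i : Fin n,
          quotD (EuclideanSpace.single i (1 : ℝ)) p (Hu (EuclideanSpace.single i (1 : ℝ))) -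
            quotD (EuclideanSpace.single i (1 : ℝ)) p (Hφ (EuclideanSpace.single i (1 : ℝ))) =
          ⟪EuclideanSpace.single i (1 : ℝ), (Hu - Hφ) (EuclideanSpace.single i (1 : ℝ))⟫ / W -
            ⟪EuclideanSpace.single i (1 : ℝ), p⟫ *
              ⟪p, (Hu - Hφ) (EuclideanSpace.single i (1 : ℝ))⟫ / W ^ 3 := by
        intro i
        rw [← map_sub, quotD_apply, ← hWdef]
        simp [ContinuousLinearMap.sub_apply]
      rw [Finset.sum_congr rfl fun i _ => hterm i]
      rw [Finset.sum_sub_distrib]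
      have h5 : ∑ i : Fin n, ⟪EuclideanSpace.single i (1 : ℝ), p⟫ *
          ⟪p, (Hu - Hφ) (EuclideanSpace.single i (1 : ℝ))⟫ / W ^ 3 = ⟪p, (Hu - Hφ) p⟫ / W ^ 3 := by
        rw [← Finset.sum_div]
        congr 1
        calc ∑ i : Fin n, ⟪EuclideanSpace.single i (1 : ℝ), p⟫ *
              ⟪p, (Hu - Hφ) (EuclideanSpace.single i (1 : ℝ))⟫
            = ∑ i : Fin n, p i * ⟪p, (Hu - Hφ) (EuclideanSpace.single i (1 : ℝ))⟫ := by
              exact Finset.sum_congr rfl fun i _ => by rw [inner_single_left']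
          _ = ⟪p, (Hu - Hφ) p⟫ := sum_pk_inner (Hu - Hφ) p
      rw [h5, ← Finset.sum_div]
      generalize (∑ i : Fin n, ⟪EuclideanSpace.single i (1 : ℝ),
        (Hu - Hφ) (EuclideanSpace.single i (1 : ℝ))⟫) = A
      generalize ⟪p, (Hu - Hφ) p⟫ = B
      field_simp
    have htrace := trace_ineq (Hu - Hφ) p hSneg
    rw [← hWdef] at htrace
    have hle : meanCurvOp n u x₀ ≤ -((n : ℝ) / R) := by
      have hd0 : meanCurvOp n u x₀ - meanCurvOp n φ x₀ ≤ 0 := by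
        rw [hdiff]
        exact mul_nonpos_iff.mpr (Or.inl ⟨by positivity, htrace⟩)
      linarith [hbar, hd0]
    have heqx := heq x₀ hx₀ball
    have hHx := hH x₀ hx₀K
    have hnR : (0:ℝ) < n := by positivity
    have h6 : -(((n : ℝ) - 1) / R) ≤ meanCurvOp n u x₀ := by
      rw [heqx]
      have h7 : -(((n : ℝ) - 1) / (n * R)) ≤ H x₀ := neg_le_of_abs_le hHx
      calc -(((n : ℝ) - 1) / R) = (n : ℝ) * (-(((n : ℝ) - 1) / (n * R))) := by
            field_simp
        _ ≤ (n : ℝ) * H x₀ := by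
            exact mul_le_mul_of_nonneg_left h7 hnR.le
    have hn2 : (2:ℝ) ≤ n := by exact_mod_cast hn
    have : -(((n : ℝ) - 1) / R) ≤ -((n : ℝ) / R) := le_trans h6 hle
    have h8 : (n : ℝ) / R ≤ ((n : ℝ) - 1) / R := by linarith
    have h9 := mul_le_mul_of_nonneg_right h8 hR.le
    rw [div_mul_cancel₀ _ hR.ne', div_mul_cancel₀ _ hR.ne'] at h9
    linarith

lemma meanCurvOp_neg (u : E → ℝ) (x : E) :
    meanCurvOp n (fun y => -u y) x = -meanCurvOp n u x := by
  unfold meanCurvOp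
  rw [← Finset.sum_neg_distrib]
  refine Finset.sum_congr rfl fun i _ => ?_
  have hgrad : ∀ y : E, gradient (fun z : E => -u z) y = -gradient u y := by
    intro y
    unfold gradient
    rw [fderiv_fun_neg, map_neg]
  have hfun : (fun y => fderiv ℝ (fun z : E => -u z) y (EuclideanSpace.single i (1 : ℝ)) /
        Real.sqrt (1 + ‖gradient (fun z : E => -u z) y‖ ^ 2)) =
      (fun y => -(fderiv ℝ u y (EuclideanSpace.single i (1 : ℝ)) /
        Real.sqrt (1 + ‖gradient u y‖ ^ 2))) := by
    funext y
    rw [fderiv_fun_neg, hgrad, norm_neg]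
    simp [neg_div]
  rw [hfun, fderiv_fun_neg]
  simp

end Aux

/-- A priori `C⁰` estimate for prescribed mean curvature graphs over a round
ball `Ω = B(0, R)` in `ℝⁿ`: there is `C = C(n, R) > 0` such that every solution
of `Q[u] = nH` on `Ω` with `sup |H| ≤ (n−1)/(nR)` satisfies
`sup_{closure Ω} |u| ≤ C + sup_{∂Ω} |u|`. -/
theorem prescribed_mean_curvature_height_estimate
    (n : ℕ) (hn : 2 ≤ n) (R : ℝ) (hR : 0 < R)
    (Ω : Set (EuclideanSpace ℝ (Fin n)))
    (hΩ : Ω = Metric.ball (0 : EuclideanSpace ℝ (Fin n)) R) :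
    ∃ C : ℝ, 0 < C ∧
      ∀ (H u : EuclideanSpace ℝ (Fin n) → ℝ),
        ContinuousOn H (closure Ω) →
        (∀ x ∈ closure Ω, |H x| ≤ ((n : ℝ) - 1) / (n * R)) →
        ContinuousOn u (closure Ω) →
        ContDiffOn ℝ 2 u Ω →
        (∀ x ∈ Ω, meanCurvOp n u x = n * H x) →
        ∀ x ∈ closure Ω,
          |u x| ≤ C + sSup ((fun y => |u y|) '' (closure Ω \ Ω)) := by
  subst hΩ
  have hclos : closure (ball (0 : EuclideanSpace ℝ (Fin n)) R)
      = closedBall (0 : EuclideanSpace ℝ (Fin n)) R := closure_ball 0 hR.ne'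
  refine ⟨R, hR, fun H u hHcont hH hu hu2 heq x hx => ?_⟩
  rw [hclos] at hH hu hx
  set B := closure (ball (0 : EuclideanSpace ℝ (Fin n)) R) \
    ball (0 : EuclideanSpace ℝ (Fin n)) R with hBdef
  have hBsphere : B = sphere (0 : EuclideanSpace ℝ (Fin n)) R := by
    rw [hBdef, hclos, closedBall_diff_ball]
  set M := sSup ((fun y => |u y|) '' B) with hMdef
  have hbdd : BddAbove ((fun y => |u y|) '' B) := by
    rw [hBsphere]
    exact ((isCompact_sphere (0 : EuclideanSpace ℝ (Fin n)) R).image_of_continuousOn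
      ((hu.mono sphere_subset_closedBall).abs)).bddAbove
  have hMy : ∀ y : EuclideanSpace ℝ (Fin n), ‖y‖ = R → |u y| ≤ M := by
    intro y hy
    refine le_csSup hbdd ⟨y, ?_, rfl⟩
    rw [hBsphere, mem_sphere_zero_iff_norm]
    exact hy
  have hub := upper_bound hn R hR H u hH hu hu2 heq M
    (fun y hy => (le_abs_self _).trans (hMy y hy)) x hx
  have hlb := upper_bound hn R hR (fun y => -H y) (fun y => -u y)
    (fun z hz => by rw [abs_neg]; exact hH z hz)
    hu.neg hu2.neg
    (fun z hz => by rw [meanCurvOp_neg, heq z hz]; ring)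
    M (fun y hy => by
      have := (neg_abs_le (u y)).trans (le_abs_self (u y))
      have h2 := hMy y hy
      linarith [neg_le_of_abs_le h2, (neg_le_abs (u y))])
    x hx
  rw [abs_le]
  constructor <;> linarith
end

section
/- Let n ≥ 1, let Ω ⊆ EuclideanSpace ℝ (Fin n) be a bounded open set, let H ∈ ℝ be a constant, and let u : EuclideanSpace ℝ (Fin n) → ℝ be three times continuously differentiable on an open set containing closure(Ω) and satisfy Σᵢ ∂ᵢ(∂ᵢu/√(1 + ‖∇u‖²)) = n·H at every point of Ω. Then sup_{closure(Ω)} ‖∇u‖ = sup_{∂Ω} ‖∇u‖; that is, the maximum of ‖∇u‖ over closure(Ω) is attained on the boundary ∂Ω. -/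
open Filter Topology
open scoped RealInnerProductSpace

open Filter Topology

/-- 1D second derivative test: at an interior local max, the second derivative is ≤ 0. -/
lemma second_deriv_test_1d {g g' : ℝ → ℝ} {a : ℝ}
    (hg : ∀ᶠ t in nhds (0:ℝ), HasDerivAt g (g' t) t)
    (hg' : HasDerivAt g' a 0) (hmax : IsLocalMax g 0) : a ≤ 0 := by
  by_contra hpos
  push_neg at hpos
  have h0 : g' 0 = 0 := by
    have h1 := hmax.deriv_eq_zero
    rwa [hg.self_of_nhds.deriv] at h1
  have hslope : Tendsto (slope g' 0) (𝓝[≠] 0) (𝓝 a) :=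
    hasDerivAt_iff_tendsto_slope.mp hg'
  have hev : ∀ᶠ t in 𝓝[>] (0:ℝ), 0 < slope g' 0 t := by
    have : ∀ᶠ t in 𝓝[≠] (0:ℝ), 0 < slope g' 0 t :=
      hslope.eventually (eventually_gt_nhds hpos)
    exact this.filter_mono (nhdsWithin_mono _ (fun t ht => ne_of_gt ht))
  have hev' : ∀ᶠ t in 𝓝[>] (0:ℝ), 0 < g' t := by
    filter_upwards [hev, self_mem_nhdsWithin] with t ht ht0
    have hts : slope g' 0 t = t⁻¹ * g' t := by simp [slope, h0]
    rw [hts] at ht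
    have := mul_pos (show (0:ℝ) < t from ht0) ht
    rwa [← mul_assoc, mul_inv_cancel₀ (ne_of_gt (show (0:ℝ) < t from ht0)), one_mul] at this
  obtain ⟨δ₁, hδ₁, hball⟩ := Metric.eventually_nhds_iff.mp (hg.and hmax)
  obtain ⟨δ₂, hδ₂pos, hδ₂⟩ := mem_nhdsGT_iff_exists_Ioo_subset.mp hev'
  have hδ₂pos' : (0:ℝ) < δ₂ := hδ₂pos
  set δ := min (δ₁ / 2) (δ₂ / 2) with hδdef
  have hδpos : 0 < δ := lt_min (by linarith) (by linarith)
  have hδlt₁ : δ < δ₁ := lt_of_le_of_lt (min_le_left _ _) (by linarith)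
  have hδle₂ : δ ≤ δ₂ / 2 := min_le_right _ _
  have hmem : ∀ t : ℝ, t ∈ Set.Icc 0 δ → dist t 0 < δ₁ := by
    intro t ht
    rw [Real.dist_eq, sub_zero, abs_of_nonneg ht.1]
    exact lt_of_le_of_lt ht.2 hδlt₁
  have hmono : StrictMonoOn g (Set.Icc 0 δ) := by
    apply strictMonoOn_of_deriv_pos (convex_Icc 0 δ)
    · intro t ht
      exact ((hball (hmem t ht)).1).continuousAt.continuousWithinAt
    · intro t ht
      rw [interior_Icc] at ht
      have hd : HasDerivAt g (g' t) t := by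
        refine (hball (hmem t ⟨le_of_lt ht.1, le_of_lt ht.2⟩)).1
      rw [hd.deriv]
      exact hδ₂ ⟨ht.1, lt_of_lt_of_le ht.2 (le_trans hδle₂ (by linarith))⟩
  have hlt : g 0 < g δ :=
    hmono (Set.left_mem_Icc.mpr (le_of_lt hδpos)) (Set.right_mem_Icc.mpr (le_of_lt hδpos)) hδpos
  have hle : g δ ≤ g 0 := by
    have := (hball (show dist δ 0 < δ₁ by rw [Real.dist_eq, sub_zero, abs_of_pos hδpos]; exact hδlt₁)).2
    exact this
  linarith

open scoped RealInnerProductSpace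

variable {E : Type*} [NormedAddCommGroup E] [InnerProductSpace ℝ E] [FiniteDimensional ℝ E]

/-- Trace of a continuous linear map is independent of the orthonormal basis used. -/
lemma sum_inner_apply_orthonormalBasis_eq {ι κ : Type*} [Fintype ι] [Fintype κ]
    (T : E →L[ℝ] E) (b : OrthonormalBasis ι ℝ E) (c : OrthonormalBasis κ ℝ E) :
    ∑ i, ⟪T (b i), b i⟫ = ∑ k, ⟪T (c k), c k⟫ := by
  have key : ∀ i, ⟪T (b i), b i⟫ = ∑ k, ⟪c k, b i⟫ * ⟪b i, (ContinuousLinearMap.adjoint T) (c k)⟫ := by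
    intro i
    rw [← c.sum_inner_mul_inner (T (b i)) (b i)]
    congr 1; funext k
    have h1 : ⟪b i, (ContinuousLinearMap.adjoint T) (c k)⟫ = ⟪T (b i), c k⟫ := by
      rw [real_inner_comm, ContinuousLinearMap.adjoint_inner_left, real_inner_comm]
    rw [h1]; ring
  simp_rw [key]
  rw [Finset.sum_comm]
  congr 1; funext k
  rw [b.sum_inner_mul_inner (c k) (ContinuousLinearMap.adjoint T (c k))]
  rw [real_inner_comm, ContinuousLinearMap.adjoint_inner_left, real_inner_comm]

/-- If `T` is symmetric positive semidefinite and `S` is symmetric with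
`⟪S y, y⟫ ≤ 0` for all `y`, then `tr (T ∘ S) ≤ 0`. -/
lemma trace_comp_nonpos {ι : Type*} [Fintype ι]
    (T S : E →L[ℝ] E) (b : OrthonormalBasis ι ℝ E)
    (hTsymm : ∀ x y, ⟪T x, y⟫ = ⟪x, T y⟫)
    (hTpsd : ∀ x, 0 ≤ ⟪T x, x⟫)
    (hSneg : ∀ y, ⟪S y, y⟫ ≤ 0) :
    ∑ i, ⟪T (S (b i)), b i⟫ ≤ 0 := by
  have hsymm : (T : E →ₗ[ℝ] E).IsSymmetric := by
    intro x y; exact hTsymm x y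
  set m := Module.finrank ℝ E with hm
  have q := hsymm.eigenvectorBasis (n := m) rfl
  have happly := hsymm.apply_eigenvectorBasis (n := m) rfl
  have hchange : ∑ i, ⟪T (S (b i)), b i⟫
      = ∑ k, ⟪(T.comp S) (hsymm.eigenvectorBasis rfl k), hsymm.eigenvectorBasis rfl k⟫ :=
    sum_inner_apply_orthonormalBasis_eq (T.comp S) b (hsymm.eigenvectorBasis rfl)
  rw [hchange]
  apply Finset.sum_nonpos
  intro k _
  set qk := hsymm.eigenvectorBasis (𝕜 := ℝ) rfl k with hqk
  have hTq : T qk = (hsymm.eigenvalues rfl k : ℝ) • qk := happly k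
  have hnorm : ‖qk‖ = 1 := (hsymm.eigenvectorBasis rfl).orthonormal.1 k
  have hmu : (0:ℝ) ≤ hsymm.eigenvalues rfl k := by
    have := hTpsd qk
    rw [hTq, real_inner_smul_left, real_inner_self_eq_norm_sq, hnorm] at this
    simpa using this
  have : ⟪(T.comp S) qk, qk⟫ = (hsymm.eigenvalues rfl k : ℝ) * ⟪S qk, qk⟫ := by
    rw [ContinuousLinearMap.comp_apply, hTsymm (S qk) qk, hTq, real_inner_smul_right,
      real_inner_comm]
  rw [this]
  exact mul_nonpos_of_nonneg_of_nonpos hmu (hSneg qk)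
open scoped RealInnerProductSpace

variable {E : Type*} [NormedAddCommGroup E] [InnerProductSpace ℝ E]

/-- `F(p) = p / √(1+‖p‖²)`. -/
noncomputable def Ffun (p : E) : E := (Real.sqrt (1 + ‖p‖^2))⁻¹ • p

/-- The derivative of `Ffun`. -/
noncomputable def Afun (p : E) : E →L[ℝ] E :=
  (Real.sqrt (1 + ‖p‖^2))⁻¹ • ContinuousLinearMap.id ℝ E
    + (-((Real.sqrt (1 + ‖p‖^2))⁻¹)^3) • ((innerSL ℝ p).smulRight p)

lemma one_add_norm_sq_pos (p : E) : (0:ℝ) < 1 + ‖p‖^2 := by positivity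

lemma sqrt_one_add_pos (p : E) : (0:ℝ) < Real.sqrt (1 + ‖p‖^2) :=
  Real.sqrt_pos.mpr (one_add_norm_sq_pos p)

lemma contDiff_Ffun : ContDiff ℝ 3 (Ffun (E := E)) := by
  have h1 : ContDiff ℝ 3 (fun p : E => 1 + ‖p‖^2) :=
    contDiff_const.add (contDiff_norm_sq ℝ)
  have h2 : ContDiff ℝ 3 (fun p : E => Real.sqrt (1 + ‖p‖^2)) :=
    h1.sqrt (fun p => ne_of_gt (one_add_norm_sq_pos p))
  have h3 : ContDiff ℝ 3 (fun p : E => (Real.sqrt (1 + ‖p‖^2))⁻¹) :=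
    h2.inv (fun p => ne_of_gt (sqrt_one_add_pos p))
  exact h3.smul contDiff_id

lemma Afun_apply (p q : E) :
    Afun p q = (Real.sqrt (1 + ‖p‖^2))⁻¹ • q
      - (((Real.sqrt (1 + ‖p‖^2))⁻¹)^3 * ⟪p, q⟫) • p := by
  simp [Afun, ContinuousLinearMap.smulRight_apply, sub_eq_add_neg, smul_smul, neg_smul]

lemma hasFDerivAt_Ffun (p : E) : HasFDerivAt (Ffun (E := E)) (Afun p) p := by
  set s := 1 + ‖p‖^2 with hs
  have hspos := one_add_norm_sq_pos p
  have hsqpos := sqrt_one_add_pos p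
  have h1 : HasFDerivAt (fun y : E => 1 + ‖y‖^2)
      ((2:ℝ) • ((innerSL ℝ) p).comp (ContinuousLinearMap.id ℝ E)) p := by
    have h1' := (hasFDerivAt_const (1:ℝ) p).add ((hasFDerivAt_id p).norm_sq)
    refine HasFDerivAt.congr_fderiv h1' ?_
    ext q
    simp [two_smul]
  have h2 : HasDerivAt (fun x : ℝ => (Real.sqrt x)⁻¹)
      (-((Real.sqrt s)^2)⁻¹ * (1/(2*Real.sqrt s))) s := by
    have hsq : HasDerivAt Real.sqrt (1/(2*Real.sqrt s)) s :=
      Real.hasDerivAt_sqrt (ne_of_gt hspos)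
    have hinv : HasDerivAt (fun x : ℝ => x⁻¹) (-((Real.sqrt s)^2)⁻¹) (Real.sqrt s) := by
      simpa using hasDerivAt_inv (ne_of_gt hsqpos)
    exact hinv.comp s hsq
  have hg : HasFDerivAt (fun y : E => (Real.sqrt (1 + ‖y‖^2))⁻¹)
      ((-((Real.sqrt s)^2)⁻¹ * (1/(2*Real.sqrt s))) •
        ((2:ℝ) • ((innerSL ℝ) p).comp (ContinuousLinearMap.id ℝ E))) p :=
    h2.comp_hasFDerivAt (f := fun y : E => 1 + ‖y‖^2) p h1
  have := hg.smul (hasFDerivAt_id p)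
  refine this.congr_fderiv ?_
  ext q
  simp only [Afun, ContinuousLinearMap.add_apply, ContinuousLinearMap.smul_apply,
    ContinuousLinearMap.id_apply, ContinuousLinearMap.smulRight_apply,
    ContinuousLinearMap.coe_smul', Pi.smul_apply, ContinuousLinearMap.coe_comp',
    Function.comp_apply]
  rw [← hs]
  congr 1
  rw [smul_smul, smul_smul]
  congr 1
  have h3 : Real.sqrt s ^ 2 = s := Real.sq_sqrt (le_of_lt hspos)
  have h4 : Real.sqrt (1 + ‖p‖^2) ^ 3 = (1 + ‖p‖^2) * Real.sqrt (1 + ‖p‖^2) := by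
    rw [pow_succ, Real.sq_sqrt (le_of_lt hspos), mul_comm]
  field_simp
  rw [h4]
  ring
lemma fderiv_Ffun (p : E) : fderiv ℝ (Ffun (E := E)) p = Afun p :=
  (hasFDerivAt_Ffun p).fderiv

lemma Afun_symm (p q r : E) : ⟪Afun p q, r⟫ = ⟪q, Afun p r⟫ := by
  rw [Afun_apply, Afun_apply]
  rw [inner_sub_left, inner_sub_right, real_inner_smul_left, real_inner_smul_left,
    real_inner_smul_right, real_inner_smul_right]
  rw [real_inner_comm q p]
  ring

lemma Afun_lower (p q : E) :
    ((Real.sqrt (1 + ‖p‖^2))⁻¹)^3 * ‖q‖^2 ≤ ⟪Afun p q, q⟫ := by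
  set c := (Real.sqrt (1 + ‖p‖^2))⁻¹ with hc
  have hcpos : 0 < c := inv_pos.mpr (sqrt_one_add_pos p)
  have hcs : c^2 * (1 + ‖p‖^2) = 1 := by
    rw [hc, inv_pow, inv_mul_eq_div, div_eq_one_iff_eq]
    · exact (Real.sq_sqrt (le_of_lt (one_add_norm_sq_pos p))).symm
    · positivity
  rw [Afun_apply, inner_sub_left, real_inner_smul_left, real_inner_smul_left,
    real_inner_self_eq_norm_sq]
  have h1 : ⟪p, q⟫ * ⟪p, q⟫ ≤ ‖p‖^2 * ‖q‖^2 := by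
    have := real_inner_mul_inner_self_le p q
    rwa [real_inner_self_eq_norm_sq, real_inner_self_eq_norm_sq] at this
  have hc3 : 0 < c^3 := by positivity
  have hkey : c = c^3 * (1 + ‖p‖^2) := by
    nlinarith [hcs]
  nlinarith [hkey, hc3, mul_le_mul_of_nonneg_left h1 (le_of_lt hc3), sq_nonneg ‖q‖,
    mul_nonneg (le_of_lt hc3) (sq_nonneg ‖q‖)]

section PDE

variable {n : ℕ} {u : EuclideanSpace ℝ (Fin n) → ℝ}
  {U : Set (EuclideanSpace ℝ (Fin n))}

/-- The derivative of the gradient map, as the Hessian symmetric form. -/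
lemma gradient_fderiv_symm (hUopen : IsOpen U) (hu3 : ContDiffOn ℝ 3 u U)
    {y : EuclideanSpace ℝ (Fin n)} (hy : y ∈ U) (a b : EuclideanSpace ℝ (Fin n)) :
    ⟪(fderiv ℝ (gradient u) y) a, b⟫ = ⟪(fderiv ℝ (gradient u) y) b, a⟫ := by
  have hu2 : ContDiffOn ℝ 2 (fderiv ℝ u) U := hu3.fderiv_of_isOpen (m := 2) hUopen (by norm_num)
  have hD2has : HasFDerivAt (fderiv ℝ u) (fderiv ℝ (fderiv ℝ u) y) y :=
    ((hu2.differentiableOn (by norm_num)).differentiableAt (hUopen.mem_nhds hy)).hasFDerivAt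
  have hev : ∀ᶠ z in nhds y, HasFDerivAt u (fderiv ℝ u z) z := by
    filter_upwards [hUopen.mem_nhds hy] with z hz
    exact ((hu3.differentiableOn (by norm_num)).differentiableAt (hUopen.mem_nhds hz)).hasFDerivAt
  have hsym := second_derivative_symmetric_of_eventually hev hD2has
  set J : StrongDual ℝ (EuclideanSpace ℝ (Fin n)) →L[ℝ] (EuclideanSpace ℝ (Fin n)) :=
    ((InnerProductSpace.toDual ℝ (EuclideanSpace ℝ (Fin n))).symm.toContinuousLinearEquiv :
      StrongDual ℝ (EuclideanSpace ℝ (Fin n)) ≃L[ℝ] (EuclideanSpace ℝ (Fin n))).toContinuousLinearMap with hJ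
  have hgradhas : HasFDerivAt (gradient u) (J.comp (fderiv ℝ (fderiv ℝ u) y)) y :=
    J.hasFDerivAt.comp y hD2has
  have hDP : fderiv ℝ (gradient u) y = J.comp (fderiv ℝ (fderiv ℝ u) y) := hgradhas.fderiv
  have hJapp : ∀ (ℓ : StrongDual ℝ (EuclideanSpace ℝ (Fin n))) (v : EuclideanSpace ℝ (Fin n)), ⟪J ℓ, v⟫ = ℓ v := fun ℓ v =>
    InnerProductSpace.toDual_symm_apply
  rw [hDP]
  simp only [ContinuousLinearMap.comp_apply]
  rw [hJapp, hJapp]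
  exact hsym a b

/-- Derivative of the directional-derivative function `z ↦ ⟪∇u z, e⟫`. -/
lemma hasFDerivAt_inner_gradient (hUopen : IsOpen U) (hu3 : ContDiffOn ℝ 3 u U)
    (e : EuclideanSpace ℝ (Fin n)) {y : EuclideanSpace ℝ (Fin n)} (hy : y ∈ U) :
    HasFDerivAt (fun z => ⟪gradient u z, e⟫)
      (innerSL ℝ ((fderiv ℝ (gradient u) y) e)) y := by
  have hu2 : ContDiffOn ℝ 2 (fderiv ℝ u) U := hu3.fderiv_of_isOpen (m := 2) hUopen (by norm_num)
  have hPc : ContDiffOn ℝ 2 (gradient u) U :=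
    ((InnerProductSpace.toDual ℝ (EuclideanSpace ℝ (Fin n))).symm.contDiff).comp_contDiffOn hu2
  have hPdiff : HasFDerivAt (gradient u) (fderiv ℝ (gradient u) y) y :=
    ((hPc.differentiableOn (by norm_num)).differentiableAt (hUopen.mem_nhds hy)).hasFDerivAt
  have h1 : HasFDerivAt (fun z => ⟪e, gradient u z⟫)
      ((innerSL ℝ e).comp (fderiv ℝ (gradient u) y)) y :=
    (innerSL ℝ e).hasFDerivAt.comp y hPdiff
  have h2 : (fun z : EuclideanSpace ℝ (Fin n) => ⟪gradient u z, e⟫) = fun z => ⟪e, gradient u z⟫ := by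
    funext z; exact real_inner_comm _ _
  rw [h2]
  refine h1.congr_fderiv ?_
  ext h
  simp only [ContinuousLinearMap.comp_apply, innerSL_apply_apply]
  rw [gradient_fderiv_symm hUopen hu3 hy e h]
  exact real_inner_comm _ _

/-- Differentiating the CMC equation in the direction `e` gives a linear PDE
for the directional derivative. -/
lemma pde_identity (hUopen : IsOpen U) (hu3 : ContDiffOn ℝ 3 u U)
    {Ω : Set (EuclideanSpace ℝ (Fin n))} (hΩopen : IsOpen Ω) (hΩU : Ω ⊆ U) {H : ℝ}
    (heq : ∀ x ∈ Ω, meanCurvOp n u x = n * H)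
    (e : EuclideanSpace ℝ (Fin n)) {x : EuclideanSpace ℝ (Fin n)} (hx : x ∈ Ω) :
    (∑ i : Fin n, ⟪EuclideanSpace.single i (1:ℝ),
        (Afun (gradient u x)) ((fderiv ℝ (fun y => (fderiv ℝ (gradient u) y) e) x)
          (EuclideanSpace.single i (1:ℝ)))⟫)
      + (∑ i : Fin n, ⟪EuclideanSpace.single i (1:ℝ),
        ((fderiv ℝ (fun y => Afun (gradient u y)) x) (EuclideanSpace.single i (1:ℝ)))
          ((fderiv ℝ (gradient u) x) e)⟫) = 0 := by
  classical
  set eb : Fin n → EuclideanSpace ℝ (Fin n) := fun i => EuclideanSpace.single i (1:ℝ) with heb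
  have hxU : x ∈ U := hΩU hx
  have hu2 : ContDiffOn ℝ 2 (fderiv ℝ u) U := hu3.fderiv_of_isOpen (m := 2) hUopen (by norm_num)
  have hPc : ContDiffOn ℝ 2 (gradient u) U :=
    ((InnerProductSpace.toDual ℝ (EuclideanSpace ℝ (Fin n))).symm.contDiff).comp_contDiffOn hu2
  have hPc1 : ContDiffOn ℝ 1 (fderiv ℝ (gradient u)) U :=
    hPc.fderiv_of_isOpen (m := 1) hUopen (by norm_num)
  set Φf : EuclideanSpace ℝ (Fin n) → EuclideanSpace ℝ (Fin n) :=
    fun y => Ffun (gradient u y) with hΦfdef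
  have hΦc : ContDiffOn ℝ 2 Φf U :=
    (contDiff_Ffun.of_le (by norm_num)).comp_contDiffOn hPc
  have hΦc1 : ContDiffOn ℝ 1 (fderiv ℝ Φf) U :=
    hΦc.fderiv_of_isOpen (m := 1) hUopen (by norm_num)
  have hPdiff : ∀ y ∈ U, HasFDerivAt (gradient u) (fderiv ℝ (gradient u) y) y := fun y hy =>
    ((hPc.differentiableOn (by norm_num)).differentiableAt (hUopen.mem_nhds hy)).hasFDerivAt
  have hΦdiff : ∀ y ∈ U, HasFDerivAt Φf (fderiv ℝ Φf y) y := fun y hy =>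
    ((hΦc.differentiableOn (by norm_num)).differentiableAt (hUopen.mem_nhds hy)).hasFDerivAt
  have hΦhas : ∀ y ∈ U, HasFDerivAt Φf
      ((Afun (gradient u y)).comp (fderiv ℝ (gradient u) y)) y :=
    fun y hy => (hasFDerivAt_Ffun (gradient u y)).comp y (hPdiff y hy)
  have hΦfderiv : ∀ y ∈ U,
      fderiv ℝ Φf y = (Afun (gradient u y)).comp (fderiv ℝ (gradient u) y) :=
    fun y hy => (hΦhas y hy).fderiv
  -- the divergence-form function G
  set G : EuclideanSpace ℝ (Fin n) → ℝ :=
    fun y => ∑ i, (innerSL ℝ (eb i)) ((fderiv ℝ Φf y) (eb i)) with hGdef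
  have hint_eq : ∀ i : Fin n,
      (fun y => fderiv ℝ u y (eb i) / Real.sqrt (1 + ‖gradient u y‖ ^ 2))
        = fun y => (innerSL ℝ (eb i)) (Φf y) := by
    intro i; funext y
    have h1 : fderiv ℝ u y (eb i) = ⟪gradient u y, eb i⟫ :=
      (InnerProductSpace.toDual_symm_apply).symm
    show fderiv ℝ u y (eb i) / Real.sqrt (1 + ‖gradient u y‖ ^ 2)
      = ⟪eb i, Ffun (gradient u y)⟫
    rw [h1, real_inner_comm (eb i), Ffun, real_inner_smul_right, div_eq_inv_mul]
  have hmc : ∀ y ∈ U, meanCurvOp n u y = G y := by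
    intro y hy
    unfold meanCurvOp
    apply Finset.sum_congr rfl
    intro i _
    rw [hint_eq i]
    have hcomp : HasFDerivAt (fun z => (innerSL ℝ (eb i)) (Φf z))
        ((innerSL ℝ (eb i)).comp (fderiv ℝ Φf y)) y :=
      ((innerSL ℝ (eb i)).hasFDerivAt.comp y (hΦdiff y hy) : _)
    rw [hcomp.fderiv]
    simp only [ContinuousLinearMap.comp_apply, heb]
  have hGev : G =ᶠ[nhds x] (fun _ => (n:ℝ) * H) := by
    filter_upwards [hΩopen.mem_nhds hx] with y hy
    rw [← hmc y (hΩU hy)]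
    exact heq y hy
  -- second derivative of Φf
  set D2 := fderiv ℝ (fderiv ℝ Φf) x with hD2def
  have hD2has : HasFDerivAt (fderiv ℝ Φf) D2 x :=
    ((hΦc1.differentiableOn (by norm_num)).differentiableAt (hUopen.mem_nhds hxU)).hasFDerivAt
  have hGhas : HasFDerivAt G (∑ i, ((innerSL ℝ (eb i)).comp
      ((ContinuousLinearMap.apply ℝ (EuclideanSpace ℝ (Fin n)) (eb i)).comp D2))) x := by
    apply HasFDerivAt.fun_sum
    intro i _
    exact ((innerSL ℝ (eb i)).comp
      (ContinuousLinearMap.apply ℝ (EuclideanSpace ℝ (Fin n)) (eb i))).hasFDerivAt.comp x hD2has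
  have hGzero : fderiv ℝ G x = 0 := by
    rw [hGev.fderiv_eq]
    exact fderiv_const_apply _
  have hkey0 : ∑ i, (innerSL ℝ (eb i)) ((D2 e) (eb i)) = 0 := by
    have h1 := hGhas.fderiv
    rw [hGzero] at h1
    have h2 := congrArg (fun L : (EuclideanSpace ℝ (Fin n)) →L[ℝ] ℝ => L e) h1.symm
    simpa using h2
  have hΦev : ∀ᶠ y in nhds x, HasFDerivAt Φf (fderiv ℝ Φf y) y := by
    filter_upwards [hUopen.mem_nhds hxU] with y hy
    exact hΦdiff y hy
  have hsym := second_derivative_symmetric_of_eventually hΦev hD2has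
  have hkey1 : ∑ i, (innerSL ℝ (eb i)) ((D2 (eb i)) e) = 0 := by
    have h3 : ∀ i, (D2 (eb i)) e = (D2 e) (eb i) := fun i => hsym (eb i) e
    simp_rw [h3]
    exact hkey0
  -- the function χ
  set Ψ : EuclideanSpace ℝ (Fin n) → EuclideanSpace ℝ (Fin n) :=
    fun y => (fderiv ℝ (gradient u) y) e with hΨdef
  have hΨc : ContDiffOn ℝ 1 Ψ U :=
    (ContinuousLinearMap.apply ℝ (EuclideanSpace ℝ (Fin n)) e).contDiff.comp_contDiffOn hPc1
  have hΨhas : HasFDerivAt Ψ (fderiv ℝ Ψ x) x :=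
    ((hΨc.differentiableOn (by norm_num)).differentiableAt (hUopen.mem_nhds hxU)).hasFDerivAt
  set 𝔄fn : EuclideanSpace ℝ (Fin n) → (EuclideanSpace ℝ (Fin n)) →L[ℝ] (EuclideanSpace ℝ (Fin n)) :=
    fun y => Afun (gradient u y) with h𝔄def
  have h𝔄c : ContDiffOn ℝ 1 𝔄fn U := by
    have h1 : ContDiff ℝ 1 (fderiv ℝ (Ffun (E := EuclideanSpace ℝ (Fin n)))) :=
      contDiff_Ffun.fderiv_right (m := 1) (by norm_num)
    have h2 := h1.comp_contDiffOn (hPc.of_le (by norm_num) : ContDiffOn ℝ 1 (gradient u) U)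
    have h3 : (fderiv ℝ (Ffun (E := EuclideanSpace ℝ (Fin n))) ∘ gradient u) = 𝔄fn := by
      funext y
      exact fderiv_Ffun _
    rwa [h3] at h2
  have h𝔄has : HasFDerivAt 𝔄fn (fderiv ℝ 𝔄fn x) x :=
    ((h𝔄c.differentiableOn (by norm_num)).differentiableAt (hUopen.mem_nhds hxU)).hasFDerivAt
  set χ : EuclideanSpace ℝ (Fin n) → EuclideanSpace ℝ (Fin n) :=
    fun y => (𝔄fn y) (Ψ y) with hχdef
  have hχhas : HasFDerivAt χ
      ((𝔄fn x).comp (fderiv ℝ Ψ x) + (fderiv ℝ 𝔄fn x).flip (Ψ x)) x :=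
    h𝔄has.clm_apply hΨhas
  have hχev : χ =ᶠ[nhds x] fun y => (fderiv ℝ Φf y) e := by
    filter_upwards [hUopen.mem_nhds hxU] with y hy
    rw [hχdef]
    simp only
    rw [hΦfderiv y hy]
    rfl
  have happe : HasFDerivAt (fun y => (fderiv ℝ Φf y) e)
      ((ContinuousLinearMap.apply ℝ (EuclideanSpace ℝ (Fin n)) e).comp D2) x :=
    (ContinuousLinearMap.apply ℝ (EuclideanSpace ℝ (Fin n)) e).hasFDerivAt.comp x hD2has
  have hχfderiv : (𝔄fn x).comp (fderiv ℝ Ψ x) + (fderiv ℝ 𝔄fn x).flip (Ψ x)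
      = (ContinuousLinearMap.apply ℝ (EuclideanSpace ℝ (Fin n)) e).comp D2 := by
    have h1 := hχhas.fderiv
    have h2 := happe.fderiv
    rw [hχev.fderiv_eq] at h1
    rw [h2] at h1
    exact h1.symm
  -- assemble
  have hterm : ∀ i, (innerSL ℝ (eb i)) ((D2 (eb i)) e)
      = ⟪eb i, (𝔄fn x) ((fderiv ℝ Ψ x) (eb i))⟫
        + ⟪eb i, ((fderiv ℝ 𝔄fn x) (eb i)) (Ψ x)⟫ := by
    intro i
    have h4 := congrArg (fun L : (EuclideanSpace ℝ (Fin n)) →L[ℝ]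
        (EuclideanSpace ℝ (Fin n)) => ⟪eb i, L (eb i)⟫) hχfderiv
    simp only [ContinuousLinearMap.add_apply, ContinuousLinearMap.comp_apply,
      ContinuousLinearMap.flip_apply, ContinuousLinearMap.apply_apply, inner_add_right] at h4
    rw [innerSL_apply_apply]
    exact h4.symm
  calc (∑ i : Fin n, ⟪eb i, (𝔄fn x) ((fderiv ℝ Ψ x) (eb i))⟫)
      + (∑ i : Fin n, ⟪eb i, ((fderiv ℝ 𝔄fn x) (eb i)) (Ψ x)⟫)
      = ∑ i, ((innerSL ℝ (eb i)) ((D2 (eb i)) e)) := by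
        rw [← Finset.sum_add_distrib]
        exact (Finset.sum_congr rfl (fun i _ => (hterm i))).symm
    _ = 0 := hkey1

end PDE

section Hopf

variable {n : ℕ} {u : EuclideanSpace ℝ (Fin n) → ℝ}
  {U : Set (EuclideanSpace ℝ (Fin n))}

lemma gradient_contDiffOn (hUopen : IsOpen U) (hu3 : ContDiffOn ℝ 3 u U) :
    ContDiffOn ℝ 2 (gradient u) U :=
  ((InnerProductSpace.toDual ℝ (EuclideanSpace ℝ (Fin n))).symm.contDiff).comp_contDiffOn
    (hu3.fderiv_of_isOpen (m := 2) hUopen (by norm_num))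

lemma Afun_grad_contDiffOn (hUopen : IsOpen U) (hu3 : ContDiffOn ℝ 3 u U) :
    ContDiffOn ℝ 1 (fun y => Afun (gradient u y)) U := by
  have h1 : ContDiff ℝ 1 (fderiv ℝ (Ffun (E := EuclideanSpace ℝ (Fin n)))) :=
    contDiff_Ffun.fderiv_right (m := 1) (by norm_num)
  have h2 := h1.comp_contDiffOn
    ((gradient_contDiffOn hUopen hu3).of_le (by norm_num) :
      ContDiffOn ℝ 1 (gradient u) U)
  have h3 : (fderiv ℝ (Ffun (E := EuclideanSpace ℝ (Fin n))) ∘ gradient u)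
      = fun y => Afun (gradient u y) := by
    funext y
    exact fderiv_Ffun _
  rwa [h3] at h2

lemma Psi_contDiffOn (hUopen : IsOpen U) (hu3 : ContDiffOn ℝ 3 u U)
    (e : EuclideanSpace ℝ (Fin n)) :
    ContDiffOn ℝ 1 (fun y => (fderiv ℝ (gradient u) y) e) U :=
  (ContinuousLinearMap.apply ℝ (EuclideanSpace ℝ (Fin n)) e).contDiff.comp_contDiffOn
    ((gradient_contDiffOn hUopen hu3).fderiv_of_isOpen (m := 1) hUopen (by norm_num))

lemma frontier_nonempty' (hn : 1 ≤ n) {Ω : Set (EuclideanSpace ℝ (Fin n))}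
    (hΩopen : IsOpen Ω) (hΩbd : Bornology.IsBounded Ω) (hne : Ω.Nonempty) :
    (closure Ω \ Ω).Nonempty := by
  by_contra h
  rw [Set.not_nonempty_iff_eq_empty, Set.diff_eq_empty] at h
  have hcl : closure Ω = Ω := le_antisymm h subset_closure
  have hclopen : IsClopen Ω := ⟨hcl ▸ isClosed_closure, hΩopen⟩
  have hnontriv : Nontrivial (EuclideanSpace ℝ (Fin n)) := by
    refine nontrivial_of_ne (EuclideanSpace.single (⟨0, hn⟩ : Fin n) (1:ℝ)) 0 ?_
    intro hcontra
    have h2 := congrArg norm hcontra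
    rw [EuclideanSpace.norm_single] at h2
    simp at h2
  have huniv := hclopen.eq_univ hne
  rw [huniv] at hΩbd
  exact NormedSpace.unbounded_univ ℝ (EuclideanSpace ℝ (Fin n)) hΩbd

end Hopf

section MaxPrinciple

variable {n : ℕ} {u : EuclideanSpace ℝ (Fin n) → ℝ}
  {U : Set (EuclideanSpace ℝ (Fin n))}

set_option maxHeartbeats 1000000 in
/-- The Hopf-type maximum principle for the directional derivative `⟪∇u, e⟫`. -/
lemma dir_max_principle (hn : 1 ≤ n)
    {Ω : Set (EuclideanSpace ℝ (Fin n))} (hΩopen : IsOpen Ω)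
    (hΩbd : Bornology.IsBounded Ω)
    (hUopen : IsOpen U) (hKU : closure Ω ⊆ U) (hu3 : ContDiffOn ℝ 3 u U)
    {H : ℝ} (heq : ∀ x ∈ Ω, meanCurvOp n u x = n * H)
    (e : EuclideanSpace ℝ (Fin n)) {x : EuclideanSpace ℝ (Fin n)} (hx : x ∈ closure Ω) :
    ⟪gradient u x, e⟫ ≤ sSup ((fun y => ⟪gradient u y, e⟫) '' (closure Ω \ Ω)) := by
  classical
  have hΩne : Ω.Nonempty := by
    rcases Set.eq_empty_or_nonempty Ω with h|h
    · rw [h] at hx; simp at hx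
    · exact h
  have hΩU : Ω ⊆ U := fun z hz => hKU (subset_closure hz)
  have hKcomp : IsCompact (closure Ω) :=
    Metric.isCompact_of_isClosed_isBounded isClosed_closure hΩbd.closure
  have hKne : (closure Ω).Nonempty := hΩne.closure
  have hbne : (closure Ω \ Ω).Nonempty := frontier_nonempty' hn hΩopen hΩbd hΩne
  set w : EuclideanSpace ℝ (Fin n) → ℝ := fun z => ⟪gradient u z, e⟫ with hwdef
  have hPc : ContDiffOn ℝ 2 (gradient u) U := gradient_contDiffOn hUopen hu3
  have hwcont : ContinuousOn w (closure Ω) :=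
    ContinuousOn.inner ((hPc.continuousOn).mono hKU) continuousOn_const
  obtain ⟨xM, hxM, hmaxM⟩ := hKcomp.exists_isMaxOn hKne hwcont
  suffices hM : w xM ≤ sSup (w '' (closure Ω \ Ω)) from le_trans (hmaxM hx) hM
  by_contra hlt
  push_neg at hlt
  set m := sSup (w '' (closure Ω \ Ω)) with hm
  have hbdry_comp : IsCompact (closure Ω \ Ω) := hKcomp.diff hΩopen
  have hwble : ∀ y ∈ closure Ω \ Ω, w y ≤ m := fun y hy =>
    le_csSup (hbdry_comp.image_of_continuousOn (hwcont.mono Set.diff_subset)).bddAbove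
      ⟨y, hy, rfl⟩
  -- the direction e₁ and the coercivity constant
  set e1 : EuclideanSpace ℝ (Fin n) := EuclideanSpace.single (⟨0, hn⟩ : Fin n) (1:ℝ) with he1
  have he1norm : ‖e1‖ = 1 := by rw [he1, EuclideanSpace.norm_single]; norm_num
  set 𝔄fn : EuclideanSpace ℝ (Fin n) →
      (EuclideanSpace ℝ (Fin n)) →L[ℝ] (EuclideanSpace ℝ (Fin n)) :=
    fun y => Afun (gradient u y) with h𝔄def
  have h𝔄c : ContDiffOn ℝ 1 𝔄fn U := Afun_grad_contDiffOn hUopen hu3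
  set qf : EuclideanSpace ℝ (Fin n) → ℝ := fun y => ⟪e1, (𝔄fn y) e1⟫ with hqf
  have hqcont : ContinuousOn qf (closure Ω) := by
    apply ContinuousOn.inner continuousOn_const
    exact ((h𝔄c.continuousOn.mono hKU).clm_apply continuousOn_const)
  obtain ⟨yc, hyc, hqmin⟩ := hKcomp.exists_isMinOn hKne hqcont
  set c := qf yc with hc
  have hqlow : ∀ y, 0 < qf y := by
    intro y
    have h1 := Afun_lower (gradient u y) e1
    rw [he1norm] at h1
    have h2 : (0:ℝ) < ((Real.sqrt (1 + ‖gradient u y‖^2))⁻¹)^3 := by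
      have := sqrt_one_add_pos (gradient u y)
      positivity
    calc (0:ℝ) < ((Real.sqrt (1 + ‖gradient u y‖^2))⁻¹)^3 * 1^2 := by simpa using h2
      _ ≤ ⟪Afun (gradient u y) e1, e1⟫ := h1
      _ = qf y := real_inner_comm _ _
  have hcpos : 0 < c := hqlow yc
  -- the first order coefficient and its bound
  set bb : EuclideanSpace ℝ (Fin n) → ℝ := fun y => ∑ i : Fin n,
    ⟪EuclideanSpace.single i (1:ℝ),
      ((fderiv ℝ 𝔄fn y) (EuclideanSpace.single i (1:ℝ))) e1⟫ with hbb
  have hbbcont : ContinuousOn bb (closure Ω) := by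
    apply continuousOn_finset_sum
    intro i _
    apply ContinuousOn.inner continuousOn_const
    have hfc : ContinuousOn (fderiv ℝ 𝔄fn) (closure Ω) :=
      (h𝔄c.continuousOn_fderiv_of_isOpen hUopen (le_refl 1)).mono hKU
    exact (hfc.clm_apply continuousOn_const).clm_apply continuousOn_const
  obtain ⟨yb, hyb, hmaxb⟩ := hKcomp.exists_isMaxOn hKne hbbcont.abs
  set β := |bb yb| with hβ
  have hβnonneg : 0 ≤ β := abs_nonneg _
  have hbbound : ∀ y ∈ closure Ω, |bb y| ≤ β := fun y hy => hmaxb hy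
  set lam := (β + 1)/c with hlam
  have hlampos : 0 < lam := div_pos (by linarith) hcpos
  have hlamc : ∀ y ∈ closure Ω, β + 1 ≤ lam * qf y := by
    intro y hy
    have h1 : c ≤ qf y := hqmin hy
    have h2 : lam * c = β + 1 := by
      rw [hlam]; field_simp
    calc β + 1 = lam * c := h2.symm
      _ ≤ lam * qf y := mul_le_mul_of_nonneg_left h1 (le_of_lt hlampos)
  -- the barrier
  set γ : EuclideanSpace ℝ (Fin n) → ℝ := fun z => Real.exp (lam * ⟪e1, z⟫) with hγ
  have hγcont : Continuous γ :=
    Real.continuous_exp.comp (continuous_const.mul (Continuous.inner continuous_const continuous_id))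
  have hγpos : ∀ z, 0 < γ z := fun z => Real.exp_pos _
  obtain ⟨yg, hyg, hmaxg⟩ := hKcomp.exists_isMaxOn hKne hγcont.continuousOn
  set C' := γ yg with hC'
  have hC'pos : 0 < C' := hγpos yg
  set ε := (w xM - m)/(2*C') with hε
  have hεpos : 0 < ε := div_pos (by linarith) (by linarith)
  set v : EuclideanSpace ℝ (Fin n) → ℝ := fun z => w z + ε * γ z with hv
  have hvcont : ContinuousOn v (closure Ω) :=
    hwcont.add (continuous_const.mul hγcont).continuousOn
  obtain ⟨x₀, hx₀K, hmax₀⟩ := hKcomp.exists_isMaxOn hKne hvcont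
  have hx₀Ω : x₀ ∈ Ω := by
    by_contra hnot
    have hx₀b : x₀ ∈ closure Ω \ Ω := ⟨hx₀K, hnot⟩
    have h1 : v xM ≤ v x₀ := hmax₀ hxM
    have h2 : v x₀ ≤ m + ε * C' :=
      add_le_add (hwble x₀ hx₀b) (mul_le_mul_of_nonneg_left (hmaxg hx₀K) (le_of_lt hεpos))
    have h4 : 0 < ε * γ xM := mul_pos hεpos (hγpos xM)
    have h5 : ε * C' = (w xM - m)/2 := by
      rw [hε]; field_simp
    have h6 : w xM + ε * γ xM ≤ m + ε * C' := le_trans h1 h2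
    rw [h5] at h6
    linarith
  have hx₀U : x₀ ∈ U := hΩU hx₀Ω
  have hlocmax : IsLocalMax v x₀ := by
    filter_upwards [hΩopen.mem_nhds hx₀Ω] with z hz using hmax₀ (subset_closure hz)
  -- the gradient of v
  set Ψ : EuclideanSpace ℝ (Fin n) → EuclideanSpace ℝ (Fin n) :=
    fun y => (fderiv ℝ (gradient u) y) e with hΨdef
  set V' : EuclideanSpace ℝ (Fin n) → EuclideanSpace ℝ (Fin n) :=
    fun y => Ψ y + (ε * lam * γ y) • e1 with hV'def
  have hγhas : ∀ y, HasFDerivAt γ ((lam * γ y) • innerSL ℝ e1) y := by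
    intro y
    have h1 : HasFDerivAt (fun z : EuclideanSpace ℝ (Fin n) => lam * ⟪e1, z⟫)
        (lam • innerSL ℝ e1) y := (innerSL ℝ e1).hasFDerivAt.const_mul lam
    have h2 := (Real.hasDerivAt_exp (lam * ⟪e1, y⟫)).comp_hasFDerivAt y h1
    have h3 : Real.exp (lam * ⟪e1, y⟫) • lam • innerSL ℝ e1 = (lam * γ y) • innerSL ℝ e1 := by
      rw [smul_smul, hγ, mul_comm]
    rw [← h3]
    exact h2
  have hV'has : ∀ y ∈ U, HasFDerivAt v (innerSL ℝ (V' y)) y := by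
    intro y hy
    have h1 : HasFDerivAt w (innerSL ℝ (Ψ y)) y :=
      hasFDerivAt_inner_gradient hUopen hu3 e hy
    have h2 : HasFDerivAt (fun z => ε * γ z) (ε • ((lam * γ y) • innerSL ℝ e1)) y :=
      (hγhas y).const_mul ε
    have h3 := h1.add h2
    refine h3.congr_fderiv ?_
    ext h
    simp only [innerSL_apply_apply, ContinuousLinearMap.add_apply, ContinuousLinearMap.smul_apply]
    rw [hV'def]
    simp only [inner_add_left, real_inner_smul_left, smul_eq_mul]
    ring
  -- first-order condition at x₀
  have hgrad0 : V' x₀ = 0 := by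
    have h1 : fderiv ℝ v x₀ = 0 := hlocmax.fderiv_eq_zero
    have h2 := (hV'has x₀ hx₀U).fderiv
    rw [h1] at h2
    have h3 := congrArg (fun L : (EuclideanSpace ℝ (Fin n)) →L[ℝ] ℝ => L (V' x₀)) h2
    simp only [ContinuousLinearMap.zero_apply, innerSL_apply_apply] at h3
    exact inner_self_eq_zero.mp h3.symm
  have hΨx₀ : Ψ x₀ = (-(ε * lam * γ x₀)) • e1 := by
    have := hgrad0
    rw [hV'def] at this
    simp only at this
    have h4 := eq_neg_of_add_eq_zero_left this
    rw [h4, neg_smul]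
  -- Hessian of v at x₀
  have hΨc : ContDiffOn ℝ 1 Ψ U := Psi_contDiffOn hUopen hu3 e
  have hΨhas : HasFDerivAt Ψ (fderiv ℝ Ψ x₀) x₀ :=
    ((hΨc.differentiableOn (by norm_num)).differentiableAt (hUopen.mem_nhds hx₀U)).hasFDerivAt
  set V'' : (EuclideanSpace ℝ (Fin n)) →L[ℝ] (EuclideanSpace ℝ (Fin n)) :=
    fderiv ℝ Ψ x₀ + (ε * lam^2 * γ x₀) • ((innerSL ℝ e1).smulRight e1) with hV''def
  have hV''has : HasFDerivAt V' V'' x₀ := by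
    have h2 : HasFDerivAt (fun y => (ε * lam * γ y) • e1)
        (((ε * lam) • ((lam * γ x₀) • innerSL ℝ e1)).smulRight e1) x₀ := by
      have h1 : HasFDerivAt (fun y => (ε * lam) * γ y)
          ((ε * lam) • ((lam * γ x₀) • innerSL ℝ e1)) x₀ := (hγhas x₀).const_mul (ε * lam)
      have := h1.smul_const e1
      convert this using 2
    have h3 := hΨhas.add h2
    have heqC : (((ε * lam) • ((lam * γ x₀) • innerSL ℝ e1)).smulRight e1 :
        EuclideanSpace ℝ (Fin n) →L[ℝ] EuclideanSpace ℝ (Fin n))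
        = (ε * lam^2 * γ x₀) • ((innerSL ℝ e1).smulRight e1) := by
      ext h
      simp only [ContinuousLinearMap.smul_apply, ContinuousLinearMap.smulRight_apply,
        innerSL_apply_apply, smul_smul, smul_eq_mul]
      rw [show ε * lam * (lam * γ x₀) = ε * lam^2 * γ x₀ by ring]
    rw [hV''def, ← heqC]
    exact h3
  -- second-order condition at x₀
  have hsecond : ∀ h : EuclideanSpace ℝ (Fin n), ⟪h, V'' h⟫ ≤ 0 := by
    intro h
    set L : ℝ → EuclideanSpace ℝ (Fin n) := fun t => x₀ + t • h with hL
    have hLcont : Continuous L := continuous_const.add (continuous_id.smul continuous_const)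
    have hL0 : L 0 = x₀ := by simp [hL]
    have hLder : ∀ t, HasDerivAt L h t := by
      intro t
      have h1 : HasDerivAt (fun s : ℝ => s • h) ((1:ℝ) • h) t := (hasDerivAt_id t).smul_const h
      rw [one_smul] at h1; exact h1.const_add x₀
    have hLU : ∀ᶠ t in nhds (0:ℝ), L t ∈ U := by
      have h1 : Filter.Tendsto L (nhds 0) (nhds x₀) := by
        rw [← hL0]
        exact hLcont.continuousAt
      exact h1.eventually_mem (hUopen.mem_nhds hx₀U)
    set g : ℝ → ℝ := fun t => v (L t) with hg
    set g' : ℝ → ℝ := fun t => ⟪V' (L t), h⟫ with hg'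
    have hghas : ∀ᶠ t in nhds (0:ℝ), HasDerivAt g (g' t) t := by
      filter_upwards [hLU] with t ht
      have h1 := (hV'has (L t) ht).comp_hasDerivAt t (hLder t)
      exact h1
    have hg'has : HasDerivAt g' ⟪V'' h, h⟫ 0 := by
      have h0 : HasFDerivAt V' V'' (L 0) := by rw [hL0]; exact hV''has
      have h1 : HasDerivAt (fun t => V' (L t)) (V'' h) 0 := h0.comp_hasDerivAt 0 (hLder 0)
      have h2 := ((innerSL ℝ h).hasFDerivAt).comp_hasDerivAt 0 h1
      have h3 : ∀ t, (innerSL ℝ h) (V' (L t)) = g' t := by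
        intro t
        simp only [innerSL_apply_apply, g']
        exact real_inner_comm _ _
      have h4 : (innerSL ℝ h) (V'' h) = ⟪V'' h, h⟫ := by
        simp only [innerSL_apply_apply]
        exact real_inner_comm _ _
      rw [← h4]
      have h5 : g' = fun t => (innerSL ℝ h) (V' (L t)) := by
        funext t
        exact (h3 t).symm
      rw [h5]
      exact h2
    have hlocg : IsLocalMax g 0 := by
      have h1 : Filter.Tendsto L (nhds 0) (nhds x₀) := by
        rw [← hL0]; exact hLcont.continuousAt
      have h2 := h1.eventually hlocmax
      filter_upwards [h2] with t ht
      simpa [g, hL0] using ht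
    have := second_deriv_test_1d hghas hg'has hlocg
    calc ⟪h, V'' h⟫ = ⟪V'' h, h⟫ := real_inner_comm _ _
      _ ≤ 0 := this
  -- the PDE at x₀
  have hpde := pde_identity hUopen hu3 hΩopen hΩU heq e hx₀Ω
  -- restate the PDE with local abbreviations (definitional equality)
  set c1 : ℝ := ε * lam * γ x₀ with hc1
  set c2 : ℝ := ε * lam^2 * γ x₀ with hc2
  have hc1pos : 0 < c1 := by
    rw [hc1]
    exact mul_pos (mul_pos hεpos hlampos) (hγpos x₀)
  -- second sum equals -c1 * bb x₀
  have hPsix : (fderiv ℝ (gradient u) x₀) e = (-(ε * lam * γ x₀)) • e1 := hΨx₀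
  have hS2 : (∑ i : Fin n, ⟪EuclideanSpace.single i (1:ℝ),
      ((fderiv ℝ (fun y => Afun (gradient u y)) x₀) (EuclideanSpace.single i (1:ℝ)))
        ((fderiv ℝ (gradient u) x₀) e)⟫) = (-c1) * bb x₀ := by
    rw [hPsix, hbb, Finset.mul_sum]
    apply Finset.sum_congr rfl
    intro i _
    rw [map_smul, real_inner_smul_right, ← h𝔄def, hc1]
  -- first sum: decompose the Hessian
  have hS1 : (∑ i : Fin n, ⟪EuclideanSpace.single i (1:ℝ),
      (Afun (gradient u x₀)) ((fderiv ℝ (fun y => (fderiv ℝ (gradient u) y) e) x₀)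
        (EuclideanSpace.single i (1:ℝ)))⟫)
      = (∑ i : Fin n, ⟪EuclideanSpace.single i (1:ℝ),
          (𝔄fn x₀) (V'' (EuclideanSpace.single i (1:ℝ)))⟫) - c2 * qf x₀ := by
    have hHΨ' : fderiv ℝ (fun y => (fderiv ℝ (gradient u) y) e) x₀
        = V'' - c2 • ((innerSL ℝ e1).smulRight e1) := by
      have h0 : fderiv ℝ Ψ x₀ = V'' - c2 • ((innerSL ℝ e1).smulRight e1) := by
        rw [hV''def, hc2, add_sub_cancel_right]
      exact h0
    rw [hHΨ']
    have hterm : ∀ i : Fin n, ⟪EuclideanSpace.single i (1:ℝ),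
        (Afun (gradient u x₀)) ((V'' - c2 • ((innerSL ℝ e1).smulRight e1))
          (EuclideanSpace.single i (1:ℝ)))⟫
        = ⟪EuclideanSpace.single i (1:ℝ), (𝔄fn x₀) (V'' (EuclideanSpace.single i (1:ℝ)))⟫
          - c2 * (⟪e1, EuclideanSpace.single i (1:ℝ)⟫
            * ⟪EuclideanSpace.single i (1:ℝ), (𝔄fn x₀) e1⟫) := by
      intro i
      rw [h𝔄def]
      simp only [ContinuousLinearMap.sub_apply, ContinuousLinearMap.smul_apply,
        ContinuousLinearMap.smulRight_apply, innerSL_apply_apply, map_sub, map_smul,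
        inner_sub_right, real_inner_smul_right, smul_smul]
      ring
    rw [Finset.sum_congr rfl (fun i _ => hterm i), Finset.sum_sub_distrib, ← Finset.mul_sum]
    have hpars : ∑ i : Fin n, ⟪e1, EuclideanSpace.single i (1:ℝ)⟫
        * ⟪EuclideanSpace.single i (1:ℝ), (𝔄fn x₀) e1⟫ = qf x₀ := by
      have h := (EuclideanSpace.basisFun (Fin n) ℝ).sum_inner_mul_inner e1 ((𝔄fn x₀) e1)
      rw [show qf x₀ = ⟪e1, (𝔄fn x₀) e1⟫ from rfl, ← h]
      apply Finset.sum_congr rfl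
      intro i _
      rw [EuclideanSpace.basisFun_apply]
    rw [hpars]
  -- trace inequality
  have htrace : (∑ i : Fin n, ⟪EuclideanSpace.single i (1:ℝ),
      (𝔄fn x₀) (V'' (EuclideanSpace.single i (1:ℝ)))⟫) ≤ 0 := by
    have hTsymm : ∀ a b : EuclideanSpace ℝ (Fin n), ⟪(𝔄fn x₀) a, b⟫ = ⟪a, (𝔄fn x₀) b⟫ :=
      fun a b => Afun_symm (gradient u x₀) a b
    have hTpsd : ∀ a : EuclideanSpace ℝ (Fin n), 0 ≤ ⟪(𝔄fn x₀) a, a⟫ := by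
      intro a
      have h1 := Afun_lower (gradient u x₀) a
      have h2 : (0:ℝ) ≤ ((Real.sqrt (1 + ‖gradient u x₀‖^2))⁻¹)^3 * ‖a‖^2 := by positivity
      exact le_trans h2 h1
    have hSneg : ∀ y : EuclideanSpace ℝ (Fin n), ⟪V'' y, y⟫ ≤ 0 := by
      intro y
      calc ⟪V'' y, y⟫ = ⟪y, V'' y⟫ := real_inner_comm _ _
        _ ≤ 0 := hsecond y
    have h := trace_comp_nonpos (𝔄fn x₀) V'' (EuclideanSpace.basisFun (Fin n) ℝ)
      hTsymm hTpsd hSneg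
    have hconv : ∀ i : Fin n, ⟪((𝔄fn x₀).comp V'') ((EuclideanSpace.basisFun (Fin n) ℝ) i),
        (EuclideanSpace.basisFun (Fin n) ℝ) i⟫
        = ⟪EuclideanSpace.single i (1:ℝ), (𝔄fn x₀) (V'' (EuclideanSpace.single i (1:ℝ)))⟫ := by
      intro i
      rw [EuclideanSpace.basisFun_apply]
      exact real_inner_comm _ _
    calc (∑ i : Fin n, ⟪EuclideanSpace.single i (1:ℝ),
        (𝔄fn x₀) (V'' (EuclideanSpace.single i (1:ℝ)))⟫)
        = ∑ i : Fin n, ⟪((𝔄fn x₀).comp V'') ((EuclideanSpace.basisFun (Fin n) ℝ) i),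
            (EuclideanSpace.basisFun (Fin n) ℝ) i⟫ :=
          (Finset.sum_congr rfl (fun i _ => (hconv i))).symm
      _ ≤ 0 := h
  -- final contradiction
  rw [hS1, hS2] at hpde
  clear_value c2 c1 V'' V' Ψ v ε C' γ lam β bb c qf 𝔄fn e1 m w
  have hq0 : β + 1 ≤ lam * qf x₀ := hlamc x₀ (subset_closure hx₀Ω)
  have hb0 : -β ≤ bb x₀ := (abs_le.mp (hbbound x₀ (subset_closure hx₀Ω))).1
  have hA : 1 ≤ lam * qf x₀ + bb x₀ := by linarith
  have hmul : c1 * 1 ≤ c1 * (lam * qf x₀ + bb x₀) :=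
    mul_le_mul_of_nonneg_left hA (le_of_lt hc1pos)
  have hring : c1 * (lam * qf x₀ + bb x₀) = c2 * qf x₀ + c1 * bb x₀ := by
    rw [hc1, hc2]; ring
  nlinarith [htrace, hpde, hmul, hring, hc1pos]

end MaxPrinciple

/-- Gradient maximum principle in the constant mean curvature case: if `u` is
`C³` on an open set containing `closure Ω` and solves `Q[u] = nH` on the
bounded open set `Ω` for a constant `H`, then the supremum of `‖∇u‖` over
`closure Ω` equals its supremum over the boundary `∂Ω = closure Ω \ Ω`. -/
theorem cmc_gradient_maximum_principle
    (n : ℕ) (hn : 1 ≤ n) (Ω : Set (EuclideanSpace ℝ (Fin n)))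
    (hΩopen : IsOpen Ω) (hΩbd : Bornology.IsBounded Ω)
    (H : ℝ) (u : EuclideanSpace ℝ (Fin n) → ℝ)
    (hu : ∃ U : Set (EuclideanSpace ℝ (Fin n)),
      IsOpen U ∧ closure Ω ⊆ U ∧ ContDiffOn ℝ 3 u U)
    (heq : ∀ x ∈ Ω, meanCurvOp n u x = n * H) :
    sSup ((fun x => ‖gradient u x‖) '' closure Ω) =
      sSup ((fun x => ‖gradient u x‖) '' (closure Ω \ Ω)) := by
  classical
  obtain ⟨U, hUopen, hKU, hu3⟩ := hu
  rcases Set.eq_empty_or_nonempty Ω with hempty | hΩne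
  · rw [hempty]
    simp
  set φ : EuclideanSpace ℝ (Fin n) → ℝ := fun x => ‖gradient u x‖ with hφ
  have hKcomp : IsCompact (closure Ω) :=
    Metric.isCompact_of_isClosed_isBounded isClosed_closure hΩbd.closure
  have hKne : (closure Ω).Nonempty := hΩne.closure
  have hbne : (closure Ω \ Ω).Nonempty := frontier_nonempty' hn hΩopen hΩbd hΩne
  have hgradcont : ContinuousOn (gradient u) (closure Ω) :=
    ((gradient_contDiffOn hUopen hu3).continuousOn).mono hKU
  have hφcont : ContinuousOn φ (closure Ω) := hgradcont.norm
  have hbdd : BddAbove (φ '' closure Ω) := (hKcomp.image_of_continuousOn hφcont).bddAbove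
  have hbddB : BddAbove (φ '' (closure Ω \ Ω)) :=
    hbdd.mono (Set.image_mono (f := φ) Set.diff_subset)
  have hSB0 : 0 ≤ sSup (φ '' (closure Ω \ Ω)) := by
    obtain ⟨y₀, hy₀⟩ := hbne
    calc (0:ℝ) ≤ φ y₀ := norm_nonneg _
      _ ≤ sSup (φ '' (closure Ω \ Ω)) := le_csSup hbddB ⟨y₀, hy₀, rfl⟩
  apply le_antisymm
  · apply csSup_le (hKne.image φ)
    rintro b ⟨x, hx, rfl⟩
    rcases eq_or_ne (gradient u x) 0 with hg0 | hgne
    · show φ x ≤ _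
      rw [hφ]
      simp only [hg0, norm_zero]
      exact hSB0
    · set e : EuclideanSpace ℝ (Fin n) := ‖gradient u x‖⁻¹ • gradient u x with he
      have hgn : (0:ℝ) < ‖gradient u x‖ := norm_pos_iff.mpr hgne
      have hne1 : ‖e‖ = 1 := by
        rw [he, norm_smul, norm_inv, norm_norm]
        field_simp
      have h1 : φ x = ⟪gradient u x, e⟫ := by
        rw [he, real_inner_smul_right, real_inner_self_eq_norm_mul_norm, hφ]
        field_simp
      have h2 := dir_max_principle hn hΩopen hΩbd hUopen hKU hu3 heq e hx
      have hbdrycomp : IsCompact (closure Ω \ Ω) := hKcomp.diff hΩopen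
      have hwe_cont : ContinuousOn (fun y => ⟪gradient u y, e⟫) (closure Ω \ Ω) :=
        ContinuousOn.inner (hgradcont.mono Set.diff_subset) continuousOn_const
      obtain ⟨ys, hys, hsupeq⟩ := hbdrycomp.exists_sSup_image_eq hbne hwe_cont
      have h3 : sSup ((fun y => ⟪gradient u y, e⟫) '' (closure Ω \ Ω))
          ≤ sSup (φ '' (closure Ω \ Ω)) := by
        rw [hsupeq]
        calc ⟪gradient u ys, e⟫ ≤ ‖gradient u ys‖ * ‖e‖ := real_inner_le_norm _ _
          _ = φ ys := by rw [hne1, mul_one]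
          _ ≤ sSup (φ '' (closure Ω \ Ω)) := le_csSup hbddB ⟨ys, hys, rfl⟩
      calc φ x = ⟪gradient u x, e⟫ := h1
        _ ≤ sSup ((fun y => ⟪gradient u y, e⟫) '' (closure Ω \ Ω)) := h2
        _ ≤ sSup (φ '' (closure Ω \ Ω)) := h3
  · exact csSup_le_csSup hbdd (hbne.image φ) (Set.image_mono (f := φ) Set.diff_subset)
end
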